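/- arXiv:2009.02714 — 5 statements merged into one kernel-verified Lean document; each statement's English description precedes it below -/
import Mathlib

section
/- Let x be a solution of the delayed consensus inequality on [t₀,∞), let ξ ≥ t₀, and let Λ(ξ) = max_{i∈[1:n]} sup_{s∈[ξ−h̄,ξ]} x_i(s). Then with θ := e^{−(n−1)·ā·h̄} one has, for every i ∈ [1:n] and every t ∈ [ξ, ξ+h̄]: x_i(t) ≤ θ·x_i(ξ) + (1−θ)·Λ(ξ). -/
open MeasureTheory Set Filter intervalIntegral

noncomputable section

/-- Standing assumptions on the weight functions: measurable,
`0 ≤ a i j t ≤ ā` on `[0,∞)` and `a i i ≡ 0`. -/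
def GoodWeights (n : ℕ) (abar : ℝ) (a : Fin n → Fin n → ℝ → ℝ) : Prop :=
  (∀ i j, Measurable (a i j)) ∧
  (∀ i j, ∀ t : ℝ, 0 ≤ t → 0 ≤ a i j t ∧ a i j t ≤ abar) ∧
  (∀ i, ∀ t : ℝ, 0 ≤ t → a i i t = 0)

/-- Standing assumptions on the delay functions: measurable,
`0 ≤ h i j t ≤ h̄` on `[0,∞)` and `h i i ≡ 0`. -/
def GoodDelays (n : ℕ) (hbar : ℝ) (h : Fin n → Fin n → ℝ → ℝ) : Prop :=
  (∀ i j, Measurable (h i j)) ∧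
  (∀ i j, ∀ t : ℝ, 0 ≤ t → 0 ≤ h i j t ∧ h i j t ≤ hbar) ∧
  (∀ i, ∀ t : ℝ, 0 ≤ t → h i i t = 0)

/-- `x` is bounded on every compact subset of `[t₀ - h̄, ∞)`. -/
def LocBounded (n : ℕ) (t0 hbar : ℝ) (x : ℝ → Fin n → ℝ) : Prop :=
  ∀ T : ℝ, ∃ C : ℝ, ∀ i : Fin n, ∀ s ∈ Icc (t0 - hbar) T, |x s i| ≤ C

/-- `x` is a solution of the delayed consensus differential *inequality* on `[t₀,∞)`:
it is locally bounded on `[t₀ - h̄, ∞)`, absolutely continuous on `[t₀,∞)` with a.e.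
derivative `D` (encoded via the integral representation with locally integrable `D`),
and `D` satisfies the consensus inequality almost everywhere on `[t₀,∞)`. -/
def IsSolIneq (n : ℕ) (a h : Fin n → Fin n → ℝ → ℝ) (hbar t0 : ℝ)
    (x D : ℝ → Fin n → ℝ) : Prop :=
  LocBounded n t0 hbar x ∧
  (∀ i : Fin n, ∀ T : ℝ, IntegrableOn (fun s => D s i) (Icc t0 T)) ∧
  (∀ i : Fin n, ∀ t : ℝ, t0 ≤ t → x t i = x t0 i + ∫ s in t0..t, D s i) ∧
  (∀ᵐ t : ℝ ∂volume, t0 ≤ t → ∀ i : Fin n,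
    D t i ≤ ∑ j : Fin n, a i j t * (x (t - h i j t) j - x t i))

/-- `x` is a solution of the delayed consensus *equation* on `[t₀,∞)`. -/
def IsSolEq (n : ℕ) (a h : Fin n → Fin n → ℝ → ℝ) (hbar t0 : ℝ)
    (x D : ℝ → Fin n → ℝ) : Prop :=
  LocBounded n t0 hbar x ∧
  (∀ i : Fin n, ∀ T : ℝ, IntegrableOn (fun s => D s i) (Icc t0 T)) ∧
  (∀ i : Fin n, ∀ t : ℝ, t0 ≤ t → x t i = x t0 i + ∫ s in t0..t, D s i) ∧
  (∀ᵐ t : ℝ ∂volume, t0 ≤ t → ∀ i : Fin n,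
    D t i = ∑ j : Fin n, a i j t * (x (t - h i j t) j - x t i))

/-- `Λ(t) = max_i sup_{s ∈ [t-h̄, t]} x_i(s)`. -/
def Lam (n : ℕ) (hbar : ℝ) (x : ℝ → Fin n → ℝ) (t : ℝ) : ℝ :=
  ⨆ i : Fin n, sSup ((fun s => x s i) '' Icc (t - hbar) t)

/-- `λ(t) = min_i inf_{s ∈ [t-h̄, t]} x_i(s)`. -/
def lam (n : ℕ) (hbar : ℝ) (x : ℝ → Fin n → ℝ) (t : ℝ) : ℝ :=
  ⨅ i : Fin n, sInf ((fun s => x s i) '' Icc (t - hbar) t)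

/-- Non-instantaneous type-symmetry of the weight matrix with sequence `tp` and
constant `K` (Definition 1). -/
def NonInstTypeSymm (n : ℕ) (a : Fin n → Fin n → ℝ → ℝ) (tp : ℕ → ℝ) (K : ℝ) : Prop :=
  tp 0 = 0 ∧ StrictMono tp ∧ Tendsto tp atTop atTop ∧ 1 ≤ K ∧
  ∀ p : ℕ, ∀ i j : Fin n,
    K⁻¹ * ∫ t in tp p..tp (p + 1), a j i t ≤ (∫ t in tp p..tp (p + 1), a i j t) ∧
    (∫ t in tp p..tp (p + 1), a i j t) ≤ K * ∫ t in tp p..tp (p + 1), a j i t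

/-- The persistent graph `G_∞`, whose arcs are the pairs `(j,i)` with
`∫_0^∞ a_{ij} = ∞` (i.e. `a i j` is not integrable on `[0,∞)`), is connected:
the symmetric reflexive-transitive closure of the arc relation relates any two nodes. -/
def PersGraphConnected (n : ℕ) (a : Fin n → Fin n → ℝ → ℝ) : Prop :=
  ∀ u v : Fin n, Relation.ReflTransGen
    (fun p q => ¬ IntegrableOn (a q p) (Ici 0) ∨ ¬ IntegrableOn (a p q) (Ici 0)) u v

/-- The weight matrix is repeatedly strongly connected with sequence `tp` and
constant `ε` (Definition 2): on each `[t_p, t_{p+1}]`, the graph whose arcs `(j,i)`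
satisfy `∫_{t_p}^{t_{p+1}} a_{ij} ≥ ε` is strongly connected. -/
def RepeatedlyStronglyConnected (n : ℕ) (a : Fin n → Fin n → ℝ → ℝ)
    (tp : ℕ → ℝ) (ε : ℝ) : Prop :=
  tp 0 = 0 ∧ StrictMono tp ∧ Tendsto tp atTop atTop ∧ 0 < ε ∧
  ∀ p : ℕ, ∀ u v : Fin n, Relation.ReflTransGen
    (fun i j => ε ≤ ∫ t in tp p..tp (p + 1), a j i t) u v

/-- The quantity `M = sup_{i,j,p} ∫_{t_p}^{t_{p+1}} a_{ij}` is finite, bounded by `M`. -/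
def MBound (n : ℕ) (a : Fin n → Fin n → ℝ → ℝ) (tp : ℕ → ℝ) (M : ℝ) : Prop :=
  ∀ p : ℕ, ∀ i j : Fin n, (∫ t in tp p..tp (p + 1), a i j t) ≤ M

end

private lemma real_le_of_forall_pos_le_add {A B : ℝ} (H : ∀ ε : ℝ, 0 < ε → A ≤ B + ε) : A ≤ B := by
  by_contra hc
  push_neg at hc
  have := H ((A - B) / 2) (by linarith)
  linarith

private lemma crossing_aux (n : ℕ) (x D : ℝ → Fin n → ℝ) (c c' : ℝ → ℝ) (α β ε : ℝ)
    (hε : 0 < ε)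
    (hxc : ∀ i, ContinuousOn (fun t => x t i) (Icc α β))
    (hc : ∀ s : ℝ, HasDerivAt c (c' s) s) (hc' : Continuous c')
    (hinit : ∀ i, x α i ≤ c α - ε)
    (hint : ∀ i, IntegrableOn (fun s => D s i) (Icc α β) volume)
    (hrep : ∀ i, ∀ u v : ℝ, α ≤ u → u ≤ v → v ≤ β → x v i = x u i + ∫ s in u..v, D s i)
    (hslope : ∀ᵐ s : ℝ ∂volume, s ∈ Ioo α β → ∀ i,
      (∀ u ∈ Icc α s, ∀ j, x u j ≤ c u) → c s - ε ≤ x s i → x s i ≤ c s → D s i ≤ c' s) :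
    ∀ t ∈ Icc α β, ∀ i, x t i ≤ c t := by
  have hcc : Continuous c := by
    rw [continuous_iff_continuousAt]
    exact fun s => (hc s).continuousAt
  by_contra hcon
  push_neg at hcon
  obtain ⟨th, hth, i0, hi0⟩ := hcon
  set E : Set ℝ := ⋃ i : Fin n, (Icc α β ∩ (fun t => x t i - c t) ⁻¹' Ici 0) with hE
  have hEclosed : IsClosed E := by
    refine isClosed_iUnion_of_finite fun i => ?_
    exact ((hxc i).sub hcc.continuousOn).preimage_isClosed_of_isClosed isClosed_Icc isClosed_Ici
  have hEsub : E ⊆ Icc α β := by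
    intro y hy
    rw [hE, mem_iUnion] at hy
    obtain ⟨i, hi⟩ := hy
    exact hi.1
  have hEne : E.Nonempty := by
    refine ⟨th, ?_⟩
    rw [hE, mem_iUnion]
    exact ⟨i0, hth, by simp only [mem_preimage, mem_Ici]; linarith⟩
  have hEbdd : BddBelow E := ⟨α, fun y hy => (hEsub hy).1⟩
  set T := sInf E with hTdef
  have hT : T ∈ E := hEclosed.csInf_mem hEne hEbdd
  obtain ⟨i, hi⟩ := mem_iUnion.mp hT
  have hTIcc : T ∈ Icc α β := hi.1
  have hTge : c T ≤ x T i := by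
    have := hi.2
    simp only [mem_preimage, mem_Ici] at this
    linarith
  have hαT : α < T := by
    rcases lt_or_eq_of_le hTIcc.1 with h' | h'
    · exact h'
    · exfalso
      have := hinit i
      rw [← h'] at hTge
      linarith
  have hbefore : ∀ u, α ≤ u → u < T → ∀ j, x u j < c u := by
    intro u hu1 hu2 j
    by_contra hle
    push_neg at hle
    have huE : u ∈ E := by
      rw [hE, mem_iUnion]
      exact ⟨j, ⟨hu1, hu2.le.trans hTIcc.2⟩, by simp only [mem_preimage, mem_Ici]; linarith⟩
    have := csInf_le hEbdd huE
    rw [← hTdef] at this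
    linarith
  set E1 : Set ℝ := Icc α T ∩ (fun s => x s i - (c s - ε)) ⁻¹' Iic 0 with hE1
  have hE1closed : IsClosed E1 := by
    refine ContinuousOn.preimage_isClosed_of_isClosed ?_ isClosed_Icc isClosed_Iic
    exact ((hxc i).mono (Icc_subset_Icc le_rfl hTIcc.2)).sub
      ((hcc.continuousOn).sub continuousOn_const)
  have hE1ne : E1.Nonempty := by
    refine ⟨α, ⟨le_rfl, hαT.le⟩, ?_⟩
    simp only [mem_preimage, mem_Iic]
    have := hinit i
    linarith
  have hE1bdd : BddAbove E1 := ⟨T, fun y hy => hy.1.2⟩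
  set t1 := sSup E1 with ht1def
  have ht1 : t1 ∈ E1 := hE1closed.csSup_mem hE1ne hE1bdd
  have ht1Icc : t1 ∈ Icc α T := ht1.1
  have ht1le : x t1 i ≤ c t1 - ε := by
    have := ht1.2
    simp only [mem_preimage, mem_Iic] at this
    linarith
  have ht1T : t1 < T := by
    rcases lt_or_eq_of_le ht1Icc.2 with h' | h'
    · exact h'
    · exfalso; rw [h'] at ht1le; linarith
  have hafter : ∀ s, t1 < s → s < T → c s - ε < x s i := by
    intro s hs1 hs2
    by_contra hle
    push_neg at hle
    have hsE1 : s ∈ E1 := by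
      refine ⟨⟨ht1Icc.1.trans hs1.le, hs2.le⟩, ?_⟩
      simp only [mem_preimage, mem_Iic]
      linarith
    have := le_csSup hE1bdd hsE1
    rw [← ht1def] at this
    linarith
  have hae : ∀ᵐ s : ℝ ∂volume, s ∈ Ioo t1 T → D s i ≤ c' s := by
    filter_upwards [hslope] with s hs hsIoo
    have hsab : s ∈ Ioo α β :=
      ⟨lt_of_le_of_lt ht1Icc.1 hsIoo.1, lt_of_lt_of_le hsIoo.2 hTIcc.2⟩
    refine hs hsab i ?_ (hafter s hsIoo.1 hsIoo.2).le
      (hbefore s hsab.1.le hsIoo.2 i).le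
    intro u hu j
    exact (hbefore u hu.1 (lt_of_le_of_lt hu.2 hsIoo.2) j).le
  have hDint : IntervalIntegrable (fun s => D s i) volume t1 T := by
    have h1 : IntegrableOn (fun s => D s i) (Icc t1 T) volume :=
      (hint i).mono_set (Icc_subset_Icc ht1Icc.1 hTIcc.2)
    have h2 : IntegrableOn (fun s => D s i) (uIcc t1 T) volume := by
      rwa [uIcc_of_le ht1T.le]
    exact h2.intervalIntegrable
  have hc'int : IntervalIntegrable c' volume t1 T := hc'.intervalIntegrable _ _
  have hmono : (∫ s in t1..T, D s i) ≤ ∫ s in t1..T, c' s := by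
    refine intervalIntegral.integral_mono_ae_restrict ht1T.le hDint hc'int ?_
    rw [← Measure.restrict_congr_set Ioo_ae_eq_Icc]
    exact (ae_restrict_iff' measurableSet_Ioo).2 hae
  have hFTC : (∫ s in t1..T, c' s) = c T - c t1 :=
    intervalIntegral.integral_eq_sub_of_hasDerivAt (fun s _ => hc s) hc'int
  have hrepT := hrep i t1 T ht1Icc.1 ht1T.le hTIcc.2
  rw [hFTC] at hmono
  linarith

theorem stmt11 (n : ℕ) (hn : 1 ≤ n) (abar hbar : ℝ) (habar : 0 ≤ abar) (hhbar : 0 ≤ hbar)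
    (a h : Fin n → Fin n → ℝ → ℝ)
    (ha : GoodWeights n abar a) (hh : GoodDelays n hbar h)
    (t0 : ℝ) (ht0 : 0 ≤ t0) (x D : ℝ → Fin n → ℝ)
    (hx : IsSolIneq n a h hbar t0 x D)
    (ξ : ℝ) (hξ : t0 ≤ ξ) :
    ∀ i : Fin n, ∀ t ∈ Icc ξ (ξ + hbar),
      x t i ≤ Real.exp (-(((n : ℝ) - 1) * abar * hbar)) * x ξ i
        + (1 - Real.exp (-(((n : ℝ) - 1) * abar * hbar))) * Lam n hbar x ξ := by
  obtain ⟨hlocb, hDint, hxrep, hDineq⟩ := hx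
  obtain ⟨haMeas, haBnd, haDiag⟩ := ha
  obtain ⟨hhMeas, hhBnd, hhDiag⟩ := hh
  haveI : Nonempty (Fin n) := Fin.pos_iff_nonempty.mp hn
  have hn1 : (1 : ℝ) ≤ (n : ℝ) := by exact_mod_cast hn
  set K : ℝ := ((n : ℝ) - 1) * abar with hKdef
  have hK0 : 0 ≤ K := mul_nonneg (by linarith) habar
  set L : ℝ := Lam n hbar x ξ with hLdef
  -- window bound
  have hwin : ∀ j : Fin n, ∀ s ∈ Icc (ξ - hbar) ξ, x s j ≤ L := by
    intro j s hs
    obtain ⟨C, hC⟩ := hlocb ξ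
    have hsub : Icc (ξ - hbar) ξ ⊆ Icc (t0 - hbar) ξ := Icc_subset_Icc (by linarith) le_rfl
    have hbdd : BddAbove ((fun s => x s j) '' Icc (ξ - hbar) ξ) := by
      refine ⟨C, ?_⟩
      rintro y ⟨u, hu, rfl⟩
      exact (abs_le.mp (hC j u (hsub hu))).2
    have h1 : x s j ≤ sSup ((fun s => x s j) '' Icc (ξ - hbar) ξ) := le_csSup hbdd ⟨s, hs, rfl⟩
    refine h1.trans ?_
    have h2 : sSup ((fun s => x s j) '' Icc (ξ - hbar) ξ)
        ≤ ⨆ i : Fin n, sSup ((fun s => x s i) '' Icc (ξ - hbar) ξ) :=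
      le_ciSup (f := fun i : Fin n => sSup ((fun s => x s i) '' Icc (ξ - hbar) ξ))
        (Set.Finite.bddAbove (Set.finite_range _)) j
    rw [hLdef]
    exact h2
  have hxiL : ∀ i, x ξ i ≤ L := fun i => hwin i ξ ⟨by linarith, le_rfl⟩
  -- continuity
  have hcont : ∀ i, ContinuousOn (fun t => x t i) (Icc t0 (ξ + hbar)) := by
    intro i
    have h1 : ContinuousOn (fun t => x t0 i + ∫ s in t0..t, D s i) (Icc t0 (ξ + hbar)) := by
      refine continuousOn_const.add ?_
      have h2 := intervalIntegral.continuousOn_primitive (μ := volume)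
        (f := fun s => D s i) (a := t0) (b := ξ + hbar) (hDint i (ξ + hbar))
      refine ContinuousOn.congr h2 ?_
      intro u hu
      simp [intervalIntegral.integral_of_le hu.1]
    refine ContinuousOn.congr h1 ?_
    intro u hu
    exact hxrep i u hu.1
  have hcontI : ∀ i, ContinuousOn (fun t => x t i) (Icc ξ (ξ + hbar)) :=
    fun i => (hcont i).mono (Icc_subset_Icc hξ le_rfl)
  -- two-point representation
  have hrep2 : ∀ i : Fin n, ∀ u v : ℝ, ξ ≤ u → u ≤ v → v ≤ ξ + hbar →
      x v i = x u i + ∫ s in u..v, D s i := by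
    intro i u v hu huv _
    have h1 : IntervalIntegrable (fun s => D s i) volume t0 u := by
      have h2 : IntegrableOn (fun s => D s i) (uIcc t0 u) volume := by
        rw [uIcc_of_le (hξ.trans hu)]
        exact hDint i u
      exact h2.intervalIntegrable
    have h2 : IntervalIntegrable (fun s => D s i) volume u v := by
      have h3 : IntegrableOn (fun s => D s i) (Icc u v) volume :=
        (hDint i v).mono_set (Icc_subset_Icc (hξ.trans hu) le_rfl)
      have h4 : IntegrableOn (fun s => D s i) (uIcc u v) volume := by rwa [uIcc_of_le huv]
      exact h4.intervalIntegrable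
    have hadd := intervalIntegral.integral_add_adjacent_intervals h1 h2
    have hru := hxrep i u (hξ.trans hu)
    have hrv := hxrep i v ((hξ.trans hu).trans huv)
    rw [← hadd] at hrv
    linarith
  -- sum bound
  have hsumB : ∀ s : ℝ, 0 ≤ s → ∀ i : Fin n, ∀ B : ℝ, 0 ≤ B →
      (∀ j, j ≠ i → x (s - h i j s) j - x s i ≤ B) →
      (∑ j : Fin n, a i j s * (x (s - h i j s) j - x s i)) ≤ K * B := by
    intro s hs0 i B hB hj
    have hb : ∀ j : Fin n,
        a i j s * (x (s - h i j s) j - x s i) ≤ (if j = i then 0 else abar * B) := by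
      intro j
      by_cases hji : j = i
      · subst hji
        simp [haDiag j s hs0]
      · simp only [hji, if_false]
        have h1 := haBnd i j s hs0
        calc a i j s * (x (s - h i j s) j - x s i) ≤ a i j s * B :=
              mul_le_mul_of_nonneg_left (hj j hji) h1.1
          _ ≤ abar * B := mul_le_mul_of_nonneg_right h1.2 hB
    calc (∑ j : Fin n, a i j s * (x (s - h i j s) j - x s i))
        ≤ ∑ j : Fin n, (if j = i then 0 else abar * B) :=
          Finset.sum_le_sum (fun j _ => hb j)
      _ = K * B := by
          have he : ∀ j : Fin n, (if j = i then (0:ℝ) else abar * B)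
              = abar * B - (if j = i then abar * B else 0) := by
            intro j; by_cases hj' : j = i <;> simp [hj']
          rw [Finset.sum_congr rfl (fun j _ => he j), Finset.sum_sub_distrib,
            Finset.sum_const, Finset.sum_ite_eq']
          simp [Finset.card_univ, nsmul_eq_mul]
          rw [hKdef]
          ring
  -- case A
  have caseA : ∀ ε : ℝ, 0 < ε → ∀ t ∈ Icc ξ (ξ + hbar), ∀ j : Fin n,
      x t j ≤ L + ε * Real.exp (K * (t - ξ)) := by
    intro ε hε
    have hderiv : ∀ s : ℝ, HasDerivAt (fun t => L + ε * Real.exp (K * (t - ξ)))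
        (ε * (Real.exp (K * (s - ξ)) * K)) s := by
      intro s
      have h1 : HasDerivAt (fun t : ℝ => K * (t - ξ)) K s := by
        simpa using ((hasDerivAt_id s).sub_const ξ).const_mul K
      exact ((h1.exp).const_mul ε).const_add L
    refine crossing_aux n x D _ _ ξ (ξ + hbar) ε hε hcontI hderiv ?_ ?_ ?_ ?_ ?_
    · fun_prop
    · intro i
      have := hxiL i
      simp only [sub_self, mul_zero, Real.exp_zero, mul_one]
      linarith
    · exact fun i => (hDint i (ξ + hbar)).mono_set (Icc_subset_Icc hξ le_rfl)
    · exact fun i u v hu huv hv => hrep2 i u v hu huv hv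
    · filter_upwards [hDineq] with s hs hsIoo i hctx h1 h2
      have hξs : ξ < s := hsIoo.1
      have hs0 : (0 : ℝ) ≤ s := le_trans (ht0.trans hξ) hξs.le
      have hDs := hs (hξ.trans hξs.le) i
      refine hDs.trans ?_
      have hdel : ∀ j, j ≠ i → x (s - h i j s) j - x s i ≤ ε := by
        intro j _
        have hhb := hhBnd i j s hs0
        have hxd : x (s - h i j s) j ≤ L + ε * Real.exp (K * (s - ξ)) := by
          rcases le_or_gt (s - h i j s) ξ with hu | hu
          · have hw := hwin j (s - h i j s) ⟨by linarith [hhb.2], hu⟩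
            have hp : 0 ≤ ε * Real.exp (K * (s - ξ)) := by positivity
            linarith
          · have hcx := hctx (s - h i j s) ⟨hu.le, by linarith [hhb.1]⟩ j
            have hm : Real.exp (K * (s - h i j s - ξ)) ≤ Real.exp (K * (s - ξ)) := by
              apply Real.exp_le_exp.mpr
              apply mul_le_mul_of_nonneg_left _ hK0
              linarith [hhb.1]
            have hm2 : ε * Real.exp (K * (s - h i j s - ξ)) ≤ ε * Real.exp (K * (s - ξ)) :=
              mul_le_mul_of_nonneg_left hm hε.le
            linarith
        linarith
      have hsum := hsumB s hs0 i ε hε.le hdel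
      refine hsum.trans ?_
      have hexp1 : 1 ≤ Real.exp (K * (s - ξ)) :=
        Real.one_le_exp (mul_nonneg hK0 (by linarith))
      nlinarith [mul_nonneg (mul_nonneg hε.le hK0) (sub_nonneg.mpr hexp1)]
  -- no overshoot
  have hL1 : ∀ t ∈ Icc ξ (ξ + hbar), ∀ j : Fin n, x t j ≤ L := by
    intro t ht j
    refine real_le_of_forall_pos_le_add ?_
    intro δ hδ
    have hEp : 0 < Real.exp (K * hbar) := Real.exp_pos _
    have hA := caseA (δ / Real.exp (K * hbar)) (by positivity) t ht j
    have hle : Real.exp (K * (t - ξ)) ≤ Real.exp (K * hbar) :=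
      Real.exp_le_exp.mpr (mul_le_mul_of_nonneg_left (by linarith [ht.2]) hK0)
    have hfin : δ / Real.exp (K * hbar) * Real.exp (K * (t - ξ)) ≤ δ := by
      calc δ / Real.exp (K * hbar) * Real.exp (K * (t - ξ))
          ≤ δ / Real.exp (K * hbar) * Real.exp (K * hbar) :=
            mul_le_mul_of_nonneg_left hle (by positivity)
        _ = δ := div_mul_cancel₀ δ hEp.ne'
    linarith
  -- case B
  have caseB : ∀ i : Fin n, ∀ t ∈ Icc ξ (ξ + hbar),
      x t i ≤ L - (L - x ξ i) * Real.exp (-(K * (t - ξ))) := by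
    intro i t ht
    refine real_le_of_forall_pos_le_add ?_
    intro δ hδ
    have hEp : 0 < Real.exp (K * hbar) := Real.exp_pos _
    set ε := δ / Real.exp (K * hbar) with hεdef
    have hε : 0 < ε := by positivity
    set A0 := L - x ξ i with hA0def
    have hA0nn : 0 ≤ A0 := by rw [hA0def]; linarith [hxiL i]
    have hderiv : ∀ s : ℝ, HasDerivAt
        (fun t => L - A0 * Real.exp (-(K * (t - ξ))) + ε * Real.exp (K * (t - ξ)))
        (A0 * (Real.exp (-(K * (s - ξ))) * K) + ε * (Real.exp (K * (s - ξ)) * K)) s := by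
      intro s
      have h1 : HasDerivAt (fun t : ℝ => K * (t - ξ)) K s := by
        simpa using ((hasDerivAt_id s).sub_const ξ).const_mul K
      have h2 : HasDerivAt (fun t : ℝ => -(K * (t - ξ))) (-K) s := h1.neg
      have h3 := (h2.exp).const_mul A0
      have h4 := (h1.exp).const_mul ε
      have h6 := (h3.const_sub L).add h4
      refine HasDerivAt.congr_deriv h6 ?_
      ring
    have key := crossing_aux 1 (fun t _ => x t i) (fun t _ => D t i)
        (fun t => L - A0 * Real.exp (-(K * (t - ξ))) + ε * Real.exp (K * (t - ξ)))
        (fun s => A0 * (Real.exp (-(K * (s - ξ))) * K) + ε * (Real.exp (K * (s - ξ)) * K))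
        ξ (ξ + hbar) ε hε (fun _ => hcontI i) hderiv (by fun_prop)
        ?_ (fun _ => (hDint i (ξ + hbar)).mono_set (Icc_subset_Icc hξ le_rfl))
        (fun _ u v hu huv hv => hrep2 i u v hu huv hv) ?_
    · have hkey := key t ht 0
      have hle : Real.exp (K * (t - ξ)) ≤ Real.exp (K * hbar) :=
        Real.exp_le_exp.mpr (mul_le_mul_of_nonneg_left (by linarith [ht.2]) hK0)
      have hfin : ε * Real.exp (K * (t - ξ)) ≤ δ := by
        rw [hεdef]
        calc δ / Real.exp (K * hbar) * Real.exp (K * (t - ξ))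
            ≤ δ / Real.exp (K * hbar) * Real.exp (K * hbar) :=
              mul_le_mul_of_nonneg_left hle (by positivity)
          _ = δ := div_mul_cancel₀ δ hEp.ne'
      linarith
    · intro _
      simp only [sub_self, mul_zero, neg_zero, Real.exp_zero, mul_one]
      rw [hA0def]
      linarith
    · filter_upwards [hDineq] with s hs hsIoo i' hctx h1 h2
      have hξs : ξ < s := hsIoo.1
      have hs0 : (0 : ℝ) ≤ s := le_trans (ht0.trans hξ) hξs.le
      have hsIcc : s ∈ Icc ξ (ξ + hbar) := ⟨hξs.le, hsIoo.2.le⟩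
      have hxsL : x s i ≤ L := hL1 s hsIcc i
      have hDs := hs (hξ.trans hξs.le) i
      refine hDs.trans ?_
      have hdel : ∀ j, j ≠ i → x (s - h i j s) j - x s i ≤ L - x s i := by
        intro j _
        have hhb := hhBnd i j s hs0
        have hxd : x (s - h i j s) j ≤ L := by
          rcases le_or_gt (s - h i j s) ξ with hu | hu
          · exact hwin j _ ⟨by linarith [hhb.2], hu⟩
          · exact hL1 _ ⟨hu.le, by linarith [hhb.1, hsIoo.2.le]⟩ j
        linarith
      have hsum := hsumB s hs0 i (L - x s i) (by linarith) hdel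
      refine hsum.trans ?_
      have hstep : K * (L - x s i) ≤ K * (A0 * Real.exp (-(K * (s - ξ)))
          - ε * Real.exp (K * (s - ξ)) + ε) :=
        mul_le_mul_of_nonneg_left (by linarith) hK0
      have hexp1 : 1 ≤ Real.exp (K * (s - ξ)) :=
        Real.one_le_exp (mul_nonneg hK0 (by linarith))
      nlinarith [mul_nonneg (mul_nonneg hK0 hε.le)
        (by linarith : (0:ℝ) ≤ Real.exp (K * (s - ξ)) - 1)]
  -- conclusion
  intro i t ht
  have hB := caseB i t ht
  have hEt : Real.exp (-(K * hbar)) ≤ Real.exp (-(K * (t - ξ))) := by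
    apply Real.exp_le_exp.mpr
    have : K * (t - ξ) ≤ K * hbar := mul_le_mul_of_nonneg_left (by linarith [ht.2]) hK0
    linarith
  have hA0 : 0 ≤ L - x ξ i := by linarith [hxiL i]
  have hmul : (L - x ξ i) * Real.exp (-(K * hbar)) ≤ (L - x ξ i) * Real.exp (-(K * (t - ξ))) :=
    mul_le_mul_of_nonneg_left hEt hA0
  nlinarith [hB, hmul]
end

section
/- Let x be a solution of the delayed consensus inequality on [t₀,∞), let τ ≥ t₀, L ∈ ℝ and δ > 0 be such that x_j(s) ≤ L for all j ∈ [1:n] and all s ∈ [τ−h̄,∞), and suppose x_i(τ) ≤ L − δ for some index i. Then for all t ≥ τ: x_i(t) ≤ L − δ·exp(−∫_τ^t α_i(s) ds), where α_i(s) := Σ_{j=1}^n a_{ij}(s). -/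
open MeasureTheory Set Filter intervalIntegral

section AuxProof
lemma swap_core {τ t : ℝ} {f g : ℝ → ℝ}
    (hf : IntegrableOn f (Ioc τ t)) (hg : IntegrableOn g (Ioc τ t)) :
    (∫ s in Ioc τ t, f s * ∫ u in Ioc τ s, g u)
      = ∫ s in Ioc τ t, ((∫ u in Ioc τ t, f u) - ∫ u in Ioc τ s, f u) * g s := by
  set μ := volume.restrict (Ioc τ t) with hμ
  have hsm : MeasurableSet {p : ℝ × ℝ | p.2 ≤ p.1} :=
    measurableSet_le measurable_snd measurable_fst
  have hI : Integrable (fun p : ℝ × ℝ => f p.1 * g p.2) (μ.prod μ) := hf.mul_prod hg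
  have hH : Integrable ({p : ℝ × ℝ | p.2 ≤ p.1}.indicator fun p : ℝ × ℝ => f p.1 * g p.2)
      (μ.prod μ) := hI.indicator hsm
  have hswap := integral_integral_swap
    (f := fun x y => {p : ℝ × ℝ | p.2 ≤ p.1}.indicator (fun p : ℝ × ℝ => f p.1 * g p.2) (x, y)) hH
  have key1 : ∀ x ∈ Ioc τ t,
      (∫ y, {p : ℝ × ℝ | p.2 ≤ p.1}.indicator (fun p : ℝ × ℝ => f p.1 * g p.2) (x, y) ∂μ)
        = f x * ∫ u in Ioc τ x, g u := by
    intro x hx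
    have e1 : (fun y => ({p : ℝ × ℝ | p.2 ≤ p.1}).indicator (fun p : ℝ × ℝ => f p.1 * g p.2) (x, y))
        = (Iic x).indicator (fun y => f x * g y) := by
      funext y; by_cases hyx : y ≤ x <;> simp [Set.indicator, hyx]
    rw [e1, MeasureTheory.integral_indicator measurableSet_Iic, hμ,
      Measure.restrict_restrict measurableSet_Iic]
    have e2 : Iic x ∩ Ioc τ t = Ioc τ x := by
      ext u; simp only [mem_inter_iff, mem_Iic, mem_Ioc]
      constructor
      · rintro ⟨h1, h2, _⟩; exact ⟨h2, h1⟩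
      · rintro ⟨h1, h2⟩; exact ⟨h2, h1, h2.trans hx.2⟩
    rw [e2]; exact MeasureTheory.integral_const_mul (f x) g
  have key2 : ∀ y ∈ Ioc τ t,
      (∫ x, {p : ℝ × ℝ | p.2 ≤ p.1}.indicator (fun p : ℝ × ℝ => f p.1 * g p.2) (x, y) ∂μ)
        = ((∫ u in Ioc τ t, f u) - ∫ u in Ioc τ y, f u) * g y := by
    intro y hy
    have hy1 : τ ≤ y := hy.1.le
    have e1 : (fun x => ({p : ℝ × ℝ | p.2 ≤ p.1}).indicator (fun p : ℝ × ℝ => f p.1 * g p.2) (x, y))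
        = (Ici y).indicator (fun x => f x * g y) := by
      funext x; by_cases hyx : y ≤ x <;> simp [Set.indicator, hyx]
    rw [e1, MeasureTheory.integral_indicator measurableSet_Ici, hμ,
      Measure.restrict_restrict measurableSet_Ici]
    have e2 : Ici y ∩ Ioc τ t = Icc y t := by
      ext u; simp only [mem_inter_iff, mem_Ici, mem_Ioc, mem_Icc]
      constructor
      · rintro ⟨h1, _, h3⟩; exact ⟨h1, h3⟩
      · rintro ⟨h1, h2⟩; exact ⟨h1, hy.1.trans_le h1, h2⟩
    rw [e2, MeasureTheory.integral_mul_const ..]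
    congr 1
    have hiy : IntervalIntegrable f volume τ y :=
      (intervalIntegrable_iff_integrableOn_Ioc_of_le hy1).2 (hf.mono_set (Ioc_subset_Ioc_right hy.2))
    have hyt : IntervalIntegrable f volume y t :=
      (intervalIntegrable_iff_integrableOn_Ioc_of_le hy.2).2 (hf.mono_set (Ioc_subset_Ioc_left hy1))
    have hadd := integral_add_adjacent_intervals hiy hyt
    rw [integral_of_le hy1, integral_of_le hy.2, integral_of_le (hy1.trans hy.2)] at hadd
    rw [integral_Icc_eq_integral_Ioc]
    linarith
  calc (∫ s in Ioc τ t, f s * ∫ u in Ioc τ s, g u)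
      = ∫ x, ∫ y, {p : ℝ × ℝ | p.2 ≤ p.1}.indicator (fun p : ℝ × ℝ => f p.1 * g p.2) (x, y) ∂μ ∂μ :=
        (setIntegral_congr_fun measurableSet_Ioc key1).symm
    _ = ∫ y, ∫ x, {p : ℝ × ℝ | p.2 ≤ p.1}.indicator (fun p : ℝ × ℝ => f p.1 * g p.2) (x, y) ∂μ ∂μ := hswap
    _ = ∫ s in Ioc τ t, ((∫ u in Ioc τ t, f u) - ∫ u in Ioc τ s, f u) * g s :=
        setIntegral_congr_fun measurableSet_Ioc key2

section
variable {τ : ℝ} {α : ℝ → ℝ} {C : ℝ}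

lemma aInt (hτ : 0 ≤ τ) (hm : Measurable α) (hnn : ∀ s, 0 ≤ s → 0 ≤ α s)
    (hbd : ∀ s, 0 ≤ s → α s ≤ C) (r : ℝ) : IntegrableOn α (Ioc τ r) := by
  apply Measure.integrableOn_of_bounded (M := C) (measure_Ioc_lt_top).ne hm.aestronglyMeasurable
  filter_upwards [ae_restrict_mem measurableSet_Ioc] with u hu
  have h0 : (0:ℝ) ≤ u := hτ.trans hu.1.le
  rw [Real.norm_eq_abs, abs_of_nonneg (hnn u h0)]
  exact hbd u h0

lemma aA_nonneg (hτ : 0 ≤ τ) (hnn : ∀ s, 0 ≤ s → 0 ≤ α s) (s : ℝ) :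
    0 ≤ ∫ u in Ioc τ s, α u :=
  setIntegral_nonneg measurableSet_Ioc fun u hu => hnn u (hτ.trans hu.1.le)

lemma aA_mono (hτ : 0 ≤ τ) (hm : Measurable α) (hnn : ∀ s, 0 ≤ s → 0 ≤ α s)
    (hbd : ∀ s, 0 ≤ s → α s ≤ C) : Monotone (fun s => ∫ u in Ioc τ s, α u) := by
  intro s s' hss'
  apply setIntegral_mono_set (aInt hτ hm hnn hbd s')
  · filter_upwards [ae_restrict_mem measurableSet_Ioc] with u hu
    exact hnn u (hτ.trans hu.1.le)
  · exact (Ioc_subset_Ioc_right hss').eventuallyLE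

lemma aAk_int (hτ : 0 ≤ τ) (hm : Measurable α) (hnn : ∀ s, 0 ≤ s → 0 ≤ α s)
    (hbd : ∀ s, 0 ≤ s → α s ≤ C) (k : ℕ) (r : ℝ) :
    IntegrableOn (fun u => α u * (∫ u' in Ioc τ u, α u') ^ k) (Ioc τ r) := by
  have hC0 : 0 ≤ C := (hnn τ hτ).trans (hbd τ hτ)
  set A : ℝ → ℝ := fun s => ∫ u in Ioc τ s, α u with hA
  have hA0 : ∀ s, 0 ≤ A s := aA_nonneg hτ hnn
  have hAmono : Monotone A := aA_mono hτ hm hnn hbd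
  have hAmeas : Measurable A := hAmono.measurable
  apply Measure.integrableOn_of_bounded (M := C * A r ^ k) (measure_Ioc_lt_top).ne
    (hm.mul (hAmeas.pow_const k)).aestronglyMeasurable
  filter_upwards [ae_restrict_mem measurableSet_Ioc] with u hu
  have h0 : (0:ℝ) ≤ u := hτ.trans hu.1.le
  rw [Real.norm_eq_abs, Pi.mul_apply, abs_of_nonneg (mul_nonneg (hnn u h0) (pow_nonneg (hA0 u) k))]
  exact mul_le_mul (hbd u h0) (pow_le_pow_left₀ (hA0 u) (hAmono hu.2) k)
    (pow_nonneg (hA0 u) k) hC0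

lemma primitive_pow (hτ : 0 ≤ τ) (hm : Measurable α) (hnn : ∀ s, 0 ≤ s → 0 ≤ α s)
    (hbd : ∀ s, 0 ≤ s → α s ≤ C) :
    ∀ k : ℕ, ∀ r, τ ≤ r →
      (∫ s in Ioc τ r, α s * (∫ u in Ioc τ s, α u) ^ k)
        = (∫ u in Ioc τ r, α u) ^ (k + 1) / ((k : ℝ) + 1) := by
  have hC0 : 0 ≤ C := (hnn τ hτ).trans (hbd τ hτ)
  set A : ℝ → ℝ := fun s => ∫ u in Ioc τ s, α u with hA
  have hA0 : ∀ s, 0 ≤ A s := aA_nonneg hτ hnn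
  have hAmono : Monotone A := aA_mono hτ hm hnn hbd
  have hAmeas : Measurable A := hAmono.measurable
  have hgk : ∀ (k : ℕ) (r : ℝ), IntegrableOn (fun u => α u * A u ^ k) (Ioc τ r) :=
    fun k r => aAk_int hτ hm hnn hbd k r
  intro k
  induction k with
  | zero =>
    intro r hr
    simp [pow_one]
  | succ k ih =>
    intro r hr
    have ihA : ∀ r', τ ≤ r' → (∫ s in Ioc τ r', α s * A s ^ k) = A r' ^ (k+1) / ((k:ℝ)+1) := ih
    have hswap := swap_core (f := α) (g := fun u => α u * A u ^ k)
      (aInt hτ hm hnn hbd r) (hgk k r)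
    have lhs_eq : (∫ s in Ioc τ r, α s * ∫ u in Ioc τ s, α u * A u ^ k)
        = (∫ s in Ioc τ r, α s * A s ^ (k + 1)) / ((k : ℝ) + 1) := by
      rw [← MeasureTheory.integral_div]
      apply setIntegral_congr_fun measurableSet_Ioc
      intro s hs
      show α s * (∫ u in Ioc τ s, α u * A u ^ k) = α s * A s ^ (k+1) / ((k:ℝ)+1)
      rw [ihA s hs.1.le]
      ring
    have rhs_eq : (∫ s in Ioc τ r, ((∫ u in Ioc τ r, α u) - ∫ u in Ioc τ s, α u) * (α s * A s ^ k))
        = A r * (A r ^ (k + 1) / ((k : ℝ) + 1)) - ∫ s in Ioc τ r, α s * A s ^ (k + 1) := by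
      have congr1 : (∫ s in Ioc τ r, ((∫ u in Ioc τ r, α u) - ∫ u in Ioc τ s, α u) * (α s * A s ^ k))
          = ∫ s in Ioc τ r, (A r * (α s * A s ^ k) - α s * A s ^ (k + 1)) := by
        apply setIntegral_congr_fun measurableSet_Ioc
        intro s _
        show (A r - A s) * (α s * A s ^ k) = A r * (α s * A s ^ k) - α s * A s ^ (k + 1)
        ring
      rw [congr1, MeasureTheory.integral_sub ((hgk k r).const_mul (A r)) (hgk (k + 1) r),
        MeasureTheory.integral_const_mul, ihA r hr]
    rw [lhs_eq, rhs_eq] at hswap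
    show (∫ s in Ioc τ r, α s * A s ^ (k + 1)) = A r ^ (k + 1 + 1) / ((↑(k+1):ℝ) + 1)
    rw [eq_div_iff (show ((↑(k+1):ℝ) + 1) ≠ 0 by positivity)]
    have hc : ((k:ℝ)+1) ≠ 0 := by positivity
    have hp : A r ^ (k + 1 + 1) = A r ^ (k+1) * A r := pow_succ _ _
    field_simp at hswap
    push_cast
    nlinarith [hswap, hp]

lemma exp_primitive (hτ : 0 ≤ τ) (hm : Measurable α) (hnn : ∀ s, 0 ≤ s → 0 ≤ α s)
    (hbd : ∀ s, 0 ≤ s → α s ≤ C) :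
    ∀ r, τ ≤ r →
      (∫ s in Ioc τ r, α s * Real.exp (∫ u in Ioc τ s, α u))
        = Real.exp (∫ u in Ioc τ r, α u) - 1 := by
  set A : ℝ → ℝ := fun s => ∫ u in Ioc τ s, α u with hA
  have hA0 : ∀ s, 0 ≤ A s := aA_nonneg hτ hnn
  intro r hr
  set μ := volume.restrict (Ioc τ r) with hμ
  set F : ℕ → ℝ → ℝ := fun k s => α s * A s ^ k / (k.factorial : ℝ) with hF
  have hFint : ∀ k, Integrable (F k) μ := fun k => (aAk_int hτ hm hnn hbd k r).div_const _
  have hFmeas : ∀ k, AEStronglyMeasurable (F k) μ := fun k => (hFint k).aestronglyMeasurable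
  have hFnn : ∀ k, 0 ≤ᵐ[μ] F k := by
    intro k
    filter_upwards [ae_restrict_mem measurableSet_Ioc] with u hu
    have h0 : (0:ℝ) ≤ u := hτ.trans hu.1.le
    exact div_nonneg (mul_nonneg (hnn u h0) (pow_nonneg (hA0 u) k)) (Nat.cast_nonneg _)
  have hval : ∀ k : ℕ, ∫ s, F k s ∂μ = A r ^ (k+1) / ((k+1).factorial : ℝ) := by
    intro k
    have e1 : ∫ s, F k s ∂μ = (∫ s in Ioc τ r, α s * A s ^ k) / (k.factorial : ℝ) :=
      MeasureTheory.integral_div _ _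
    rw [e1, primitive_pow hτ hm hnn hbd k r hr, div_div]
    congr 1
    rw [Nat.factorial_succ]
    push_cast
    ring
  have hsummable : Summable (fun k : ℕ => A r ^ (k+1) / ((k+1).factorial : ℝ)) :=
    (Real.summable_pow_div_factorial (A r)).comp_injective Nat.succ_injective
  have hsum_nn : ∀ k : ℕ, 0 ≤ A r ^ (k+1) / ((k+1).factorial : ℝ) := fun k =>
    div_nonneg (pow_nonneg (hA0 r) _) (Nat.cast_nonneg _)
  have hlint : ∑' k : ℕ, ∫⁻ s, ‖F k s‖₊ ∂μ ≠ ⊤ := by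
    have e : ∀ k : ℕ, ∫⁻ s, ‖F k s‖₊ ∂μ = ENNReal.ofReal (A r ^ (k+1) / ((k+1).factorial : ℝ)) := by
      intro k
      rw [← hval k, MeasureTheory.ofReal_integral_eq_lintegral_ofReal (hFint k) (hFnn k)]
      apply lintegral_congr_ae
      filter_upwards [hFnn k] with s hs
      exact Real.enorm_eq_ofReal hs
    simp only [e]
    rw [← ENNReal.ofReal_tsum_of_nonneg hsum_nn hsummable]
    exact ENNReal.ofReal_ne_top
  have hsw := MeasureTheory.integral_tsum hFmeas hlint
  have hexp : ∀ s : ℝ, (∑' k : ℕ, F k s) = α s * Real.exp (A s) := by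
    intro s
    have e1 : ∀ k : ℕ, F k s = α s * (A s ^ k / (k.factorial : ℝ)) := by
      intro k
      show α s * A s ^ k / (k.factorial : ℝ) = _
      ring
    rw [tsum_congr e1, tsum_mul_left]
    congr 1
    rw [Real.exp_eq_exp_ℝ, NormedSpace.exp_eq_tsum_div]
  have lhs_eq : (∫ s, (∑' k : ℕ, F k s) ∂μ) = ∫ s in Ioc τ r, α s * Real.exp (A s) :=
    integral_congr_ae (Eventually.of_forall hexp)
  have hs2 : Summable (fun k : ℕ => A r ^ k / (k.factorial : ℝ)) :=
    Real.summable_pow_div_factorial _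
  have hshift := hs2.tsum_eq_zero_add
  have hexp_r : Real.exp (A r) = ∑' k : ℕ, A r ^ k / (k.factorial : ℝ) := by
    rw [Real.exp_eq_exp_ℝ, NormedSpace.exp_eq_tsum_div]
  have rhs_eq : (∑' k : ℕ, ∫ s, F k s ∂μ) = Real.exp (A r) - 1 := by
    rw [tsum_congr hval]
    rw [hexp_r, hshift]
    simp
  rw [lhs_eq, rhs_eq] at hsw
  exact hsw
end

end AuxProof

theorem stmt12 (n : ℕ) (hn : 1 ≤ n) (abar hbar : ℝ) (habar : 0 ≤ abar) (hhbar : 0 ≤ hbar)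
    (a h : Fin n → Fin n → ℝ → ℝ)
    (ha : GoodWeights n abar a) (hh : GoodDelays n hbar h)
    (t0 : ℝ) (ht0 : 0 ≤ t0) (x D : ℝ → Fin n → ℝ)
    (hx : IsSolIneq n a h hbar t0 x D)
    (τ : ℝ) (hτ : t0 ≤ τ) (L δ : ℝ) (hδ : 0 < δ)
    (hbound : ∀ j : Fin n, ∀ s ∈ Ici (τ - hbar), x s j ≤ L)
    (i : Fin n) (hi : x τ i ≤ L - δ) :
    ∀ t : ℝ, τ ≤ t →
      x t i ≤ L - δ * Real.exp (-(∫ s in τ..t, ∑ j : Fin n, a i j s)) := by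
  obtain ⟨hlb, hDint, hrep, hineq⟩ := hx
  intro t ht
  have hτ0 : 0 ≤ τ := ht0.trans hτ
  set α : ℝ → ℝ := fun s => ∑ j : Fin n, a i j s with hα
  have hαm : Measurable α := Finset.measurable_sum _ (fun j _ => ha.1 i j)
  have hαnn : ∀ s, 0 ≤ s → 0 ≤ α s := fun s hs =>
    Finset.sum_nonneg fun j _ => (ha.2.1 i j s hs).1
  have hαbd : ∀ s, 0 ≤ s → α s ≤ (n : ℝ) * abar := by
    intro s hs
    calc α s ≤ ∑ _j : Fin n, abar := Finset.sum_le_sum fun j _ => (ha.2.1 i j s hs).2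
    _ = (n : ℝ) * abar := by simp [Finset.sum_const, Finset.card_univ, nsmul_eq_mul]
  set A : ℝ → ℝ := fun s => ∫ u in Ioc τ s, α u with hA
  set B : ℝ → ℝ := fun s => Real.exp (A s) with hB
  have hA0 : ∀ s, 0 ≤ A s := aA_nonneg hτ0 hαnn
  have hAmono : Monotone A := aA_mono hτ0 hαm hαnn hαbd
  have hBpos : ∀ s, 0 < B s := fun s => Real.exp_pos _
  have hBmeas : Measurable B := Real.measurable_exp.comp hAmono.measurable
  set μ := volume.restrict (Ioc τ t) with hμ
  set c : ℝ := x τ i with hc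
  set F : ℝ → ℝ := fun s => ∫ u in Ioc τ s, D u i with hF
  -- integrability of D on Ioc τ t
  have hDI : IntegrableOn (fun u => D u i) (Ioc τ t) :=
    (hDint i t).mono_set (fun u hu => ⟨hτ.trans hu.1.le, hu.2⟩)
  -- integral representation from τ
  have hrepr : ∀ s, τ ≤ s → x s i = c + F s := by
    intro s hs
    have h1 := hrep i s (hτ.trans hs)
    have h2 := hrep i τ hτ
    have hint1 : IntervalIntegrable (fun u => D u i) volume t0 τ :=
      (intervalIntegrable_iff_integrableOn_Ioc_of_le hτ).2
        ((hDint i τ).mono_set Ioc_subset_Icc_self)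
    have hint2 : IntervalIntegrable (fun u => D u i) volume τ s :=
      (intervalIntegrable_iff_integrableOn_Ioc_of_le hs).2
        ((hDint i s).mono_set (fun u hu => ⟨hτ.trans hu.1.le, hu.2⟩))
    have hadd := intervalIntegral.integral_add_adjacent_intervals hint1 hint2
    have hFs : F s = ∫ u in τ..s, D u i := (intervalIntegral.integral_of_le hs).symm
    rw [h1, hc, h2, hFs]
    linarith [hadd]
  -- B-identity
  have hBid : ∀ s, τ ≤ s → (∫ u in Ioc τ s, α u * B u) = B s - 1 :=
    fun s hs => exp_primitive hτ0 hαm hαnn hαbd s hs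
  -- integrability of α * B on Ioc τ t
  have hgI : IntegrableOn (fun s => α s * B s) (Ioc τ t) := by
    apply Measure.integrableOn_of_bounded (M := (n : ℝ) * abar * B t) (measure_Ioc_lt_top).ne
      (hαm.mul hBmeas).aestronglyMeasurable
    filter_upwards [ae_restrict_mem measurableSet_Ioc] with u hu
    have h0 : (0:ℝ) ≤ u := hτ0.trans hu.1.le
    rw [Real.norm_eq_abs, Pi.mul_apply, abs_of_nonneg (mul_nonneg (hαnn u h0) (hBpos u).le)]
    exact mul_le_mul (hαbd u h0) (Real.exp_le_exp.2 (hAmono hu.2)) (hBpos u).le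
      (mul_nonneg (Nat.cast_nonneg n) habar)
  -- B bounded a.e. on μ
  have hBbd : ∀ᵐ s ∂μ, ‖B s‖ ≤ B t := by
    filter_upwards [ae_restrict_mem measurableSet_Ioc] with s hs
    rw [Real.norm_eq_abs, abs_of_nonneg (hBpos s).le]
    exact Real.exp_le_exp.2 (hAmono hs.2)
  have hBD : Integrable (fun s => B s * D s i) μ :=
    hDI.bdd_mul hBmeas.aestronglyMeasurable hBbd
  -- F is continuous on Icc τ t, hence a.e. strongly measurable and bounded on μ
  have hDtil : Integrable ((Ioc τ t).indicator (fun u => D u i)) volume :=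
    (integrable_indicator_iff measurableSet_Ioc).2 hDI
  have hGcont : Continuous fun s => ∫ u in τ..s, (Ioc τ t).indicator (fun u => D u i) u :=
    intervalIntegral.continuous_primitive (fun _ _ => hDtil.intervalIntegrable) τ
  have hFG : ∀ s ∈ Icc τ t, F s = ∫ u in τ..s, (Ioc τ t).indicator (fun u => D u i) u := by
    intro s hs
    rw [intervalIntegral.integral_of_le hs.1]
    apply setIntegral_congr_fun measurableSet_Ioc
    intro u hu
    have hmem : u ∈ Ioc τ t := ⟨hu.1, hu.2.trans hs.2⟩
    exact (Set.indicator_of_mem hmem (fun v => D v i)).symm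
  have hFcont : ContinuousOn F (Ioc τ t) :=
    ContinuousOn.congr hGcont.continuousOn
      (fun s hs => hFG s ⟨hs.1.le, hs.2⟩)
  have hFmeas : AEStronglyMeasurable F μ := hFcont.aestronglyMeasurable measurableSet_Ioc
  set CF : ℝ := ∫ u in Ioc τ t, ‖D u i‖ with hCF
  have hFbd : ∀ᵐ s ∂μ, ‖F s‖ ≤ CF := by
    filter_upwards [ae_restrict_mem measurableSet_Ioc] with s hs
    calc ‖F s‖ ≤ ∫ u in Ioc τ s, ‖D u i‖ := norm_integral_le_integral_norm _
    _ ≤ CF := setIntegral_mono_set hDI.norm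
        (Eventually.of_forall fun u => norm_nonneg _)
        ((Ioc_subset_Ioc_right hs.2).eventuallyLE)
  have hFgI : Integrable (fun s => F s * (α s * B s)) μ :=
    hgI.bdd_mul hFmeas hFbd
  -- the swap identity
  have hswap := swap_core (f := fun u => D u i) (g := fun s => α s * B s) hDI hgI
  have hswapL : (∫ s in Ioc τ t, D s i * ∫ u in Ioc τ s, α u * B u)
      = (∫ s in Ioc τ t, B s * D s i) - F t := by
    have e1 : (∫ s in Ioc τ t, D s i * ∫ u in Ioc τ s, α u * B u)
        = ∫ s in Ioc τ t, (B s * D s i - D s i) := by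
      apply setIntegral_congr_fun measurableSet_Ioc
      intro s hs
      show D s i * (∫ u in Ioc τ s, α u * B u) = B s * D s i - D s i
      rw [hBid s hs.1.le]
      ring
    rw [e1, MeasureTheory.integral_sub hBD hDI]
  have hswapR : (∫ s in Ioc τ t, ((∫ u in Ioc τ t, D u i) - ∫ u in Ioc τ s, D u i) * (α s * B s))
      = F t * (B t - 1) - ∫ s in Ioc τ t, F s * (α s * B s) := by
    have e1 : (∫ s in Ioc τ t, ((∫ u in Ioc τ t, D u i) - ∫ u in Ioc τ s, D u i) * (α s * B s))
        = ∫ s in Ioc τ t, (F t * (α s * B s) - F s * (α s * B s)) := by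
      apply setIntegral_congr_fun measurableSet_Ioc
      intro s hs
      show (F t - F s) * (α s * B s) = F t * (α s * B s) - F s * (α s * B s)
      ring
    rw [e1, MeasureTheory.integral_sub (hgI.const_mul (F t)) hFgI,
      MeasureTheory.integral_const_mul, hBid t ht]
  have hIFg : (∫ s in Ioc τ t, F s * (α s * B s))
      = F t * (B t - 1) - ((∫ s in Ioc τ t, B s * D s i) - F t) := by
    rw [hswapL, hswapR] at hswap
    linarith
  -- the main nonnegative integral
  set R : ℝ := ∫ s in Ioc τ t, ((L - c - F s) * (α s * B s) - B s * D s i) with hR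
  have hRval : R = (L - c) * (B t - 1) - F t * B t := by
    have h3 : Integrable (fun s => (L - c) * (α s * B s) - F s * (α s * B s)) μ :=
      (hgI.const_mul (L - c)).sub hFgI
    calc R = ∫ s in Ioc τ t, (((L - c) * (α s * B s) - F s * (α s * B s)) - B s * D s i) := by
          apply setIntegral_congr_fun measurableSet_Ioc
          intro s _
          show (L - c - F s) * (α s * B s) - B s * D s i = _
          ring
    _ = (∫ s in Ioc τ t, ((L - c) * (α s * B s) - F s * (α s * B s)))
        - ∫ s in Ioc τ t, B s * D s i := MeasureTheory.integral_sub h3 hBD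
    _ = ((L - c) * (B t - 1)
          - (F t * (B t - 1) - ((∫ s in Ioc τ t, B s * D s i) - F t)))
        - ∫ s in Ioc τ t, B s * D s i := by
          rw [MeasureTheory.integral_sub (hgI.const_mul (L - c)) hFgI,
            MeasureTheory.integral_const_mul, hBid t ht, hIFg]
    _ = (L - c) * (B t - 1) - F t * B t := by ring
  have hRnn : 0 ≤ R := by
    apply setIntegral_nonneg_of_ae_restrict
    filter_upwards [ae_restrict_of_ae hineq, ae_restrict_mem measurableSet_Ioc] with s hs1 hs2
    have hs0 : (0:ℝ) ≤ s := hτ0.trans hs2.1.le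
    have hDle := hs1 (hτ.trans hs2.1.le) i
    have hsum : (∑ j : Fin n, a i j s * (x (s - h i j s) j - x s i)) ≤ α s * (L - x s i) := by
      have e2 : α s * (L - x s i) = ∑ j : Fin n, a i j s * (L - x s i) := by
        rw [hα]; rw [Finset.sum_mul]
      rw [e2]
      apply Finset.sum_le_sum
      intro j _
      apply mul_le_mul_of_nonneg_left _ (ha.2.1 i j s hs0).1
      have hmem : s - h i j s ∈ Ici (τ - hbar) := by
        have := (hh.2.1 i j s hs0).2
        simp only [mem_Ici]
        linarith [hs2.1.le]
      have := hbound j (s - h i j s) hmem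
      linarith
    have hxs : x s i = c + F s := hrepr s hs2.1.le
    have hD : D s i ≤ α s * (L - x s i) := hDle.trans hsum
    have e : (L - c - F s) * (α s * B s) - B s * D s i
        = B s * (α s * (L - x s i) - D s i) := by rw [hxs]; ring
    rw [e]
    exact mul_nonneg (hBpos s).le (by linarith)
  -- conclude
  have hxt : x t i = c + F t := hrepr t ht
  have hkey : δ ≤ (L - x t i) * B t := by
    have e : (L - x t i) * B t = (L - c) + R := by rw [hxt, hRval]; ring
    rw [e]
    have : δ ≤ L - c := by rw [hc]; linarith
    linarith
  have hBt : (0:ℝ) < B t := hBpos t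
  have h2 : δ / B t ≤ L - x t i := (div_le_iff₀ hBt).2 hkey
  have hAt : (∫ s in τ..t, α s) = A t := by
    rw [intervalIntegral.integral_of_le ht]
  have h3 : δ * Real.exp (-(∫ s in τ..t, α s)) = δ / B t := by
    rw [hAt, Real.exp_neg, div_eq_mul_inv]
  linarith
end

section
/- Let x be a solution of the delayed consensus inequality on [t₀,∞), let τ ≥ t₀, T > τ, L ∈ ℝ, δ₀ > 0, ε > 0 and M' ≥ 0, and let i,j ∈ [1:n]. Suppose x_l(s) ≤ L for all l ∈ [1:n] and s ∈ [τ−h̄,∞), that x_i(s) ≤ L − δ₀ for all s ∈ [τ−h̄, T], that ∫_τ^T a_{ji}(t) dt ≥ ε, and that ∫_τ^T α_j(t) dt ≤ M' where α_j(t) := Σ_{l=1}^n a_{jl}(t). Then x_j(T) ≤ L − δ₀·ε·e^{−M'}. -/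
set_option maxHeartbeats 1600000


open MeasureTheory Set Filter intervalIntegral

section aux
variable {α : ℝ → ℝ} {C : ℝ}

lemma auxII (hm : Measurable α) (h0 : ∀ t, 0 ≤ α t) (hC : ∀ t, α t ≤ C)
    (p q : ℝ) : IntervalIntegrable α volume p q := by
  rw [intervalIntegrable_iff]
  apply Measure.integrableOn_of_bounded (M := C) measure_Ioc_lt_top.ne
    hm.aestronglyMeasurable
  filter_upwards with s
  rw [Real.norm_eq_abs, abs_le]
  exact ⟨by linarith [h0 s, hC s], hC s⟩

lemma aux_primitive_add (hm : Measurable α) (h0 : ∀ t, 0 ≤ α t) (hC : ∀ t, α t ≤ C)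
    (a p q : ℝ) : (∫ t in a..p, α t) + ∫ t in p..q, α t = ∫ t in a..q, α t :=
  integral_add_adjacent_intervals (auxII hm h0 hC a p) (auxII hm h0 hC p q)

lemma aux_mono (hm : Measurable α) (h0 : ∀ t, 0 ≤ α t) (hC : ∀ t, α t ≤ C)
    (a : ℝ) : Monotone (fun s => ∫ t in a..s, α t) := by
  intro p q hpq
  have h1 : 0 ≤ ∫ t in p..q, α t :=
    intervalIntegral.integral_nonneg hpq (fun u _ => h0 u)
  have h2 := aux_primitive_add hm h0 hC a p q
  simp only
  linarith

lemma aux_cont (hm : Measurable α) (h0 : ∀ t, 0 ≤ α t) (hC : ∀ t, α t ≤ C)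
    (a : ℝ) : Continuous (fun s => ∫ t in a..s, α t) :=
  intervalIntegral.continuous_primitive (auxII hm h0 hC) a

lemma aux_gII (hm : Measurable α) (h0 : ∀ t, 0 ≤ α t) (hC : ∀ t, α t ≤ C)
    (a p q : ℝ) :
    IntervalIntegrable (fun s => α s * Real.exp (∫ t in a..s, α t)) volume p q := by
  rw [intervalIntegrable_iff]
  set A : ℝ → ℝ := fun s => ∫ t in a..s, α t with hA
  apply Measure.integrableOn_of_bounded (M := C * Real.exp (A (max p q)))
    measure_Ioc_lt_top.ne
  · exact (hm.mul ((Real.continuous_exp.comp (aux_cont hm h0 hC a)).measurable)).aestronglyMeasurable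
  · rw [ae_restrict_iff' measurableSet_Ioc]
    filter_upwards with s hs
    have hs2 : s ≤ max p q := hs.2
    have hAm : A s ≤ A (max p q) := aux_mono hm h0 hC a hs2
    have he : Real.exp (A s) ≤ Real.exp (A (max p q)) := Real.exp_le_exp.2 hAm
    have h0' := h0 s
    have hC' := hC s
    rw [Real.norm_eq_abs, abs_of_nonneg (by positivity)]
    have := Real.exp_pos (A s)
    nlinarith

lemma core_exp (hm : Measurable α) (h0 : ∀ t, 0 ≤ α t) (hC : ∀ t, α t ≤ C)
    {a b : ℝ} (hab : a ≤ b) :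
    ∫ s in a..b, α s * Real.exp (∫ t in a..s, α t)
      = Real.exp (∫ t in a..b, α t) - 1 := by
  set A : ℝ → ℝ := fun s => ∫ t in a..s, α t with hA
  have hC0 : (0:ℝ) ≤ C := le_trans (h0 0) (hC 0)
  have hmono := aux_mono hm h0 hC a
  have hgii := aux_gII hm h0 hC a
  set X : ℝ := (∫ s in a..b, α s * Real.exp (A s)) - (Real.exp (A b) - 1) with hX
  have key : ∀ N : ℕ, 1 ≤ N → |X| ≤ C * (b - a) * Real.exp (A b) / N := by
    intro N hN
    have hNpos : (0:ℝ) < N := by exact_mod_cast hN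
    set δ : ℝ := (b - a) / N with hδ
    have hδ0 : 0 ≤ δ := div_nonneg (by linarith) hNpos.le
    set u : ℕ → ℝ := fun k => a + k * δ with hu
    have hu0 : u 0 = a := by simp [hu]
    have huN : u N = b := by
      simp only [hu, hδ]
      field_simp
      ring
    have humono : ∀ k : ℕ, u k ≤ u (k + 1) := by
      intro k
      simp only [hu]
      have : (k:ℝ) ≤ (k:ℝ) + 1 := by linarith
      push_cast
      nlinarith
    have hsum1 : ∑ k ∈ Finset.range N, ∫ s in u k..u (k+1), α s * Real.exp (A s)
        = ∫ s in a..b, α s * Real.exp (A s) := by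
      rw [← hu0, ← huN]
      exact sum_integral_adjacent_intervals (fun k _ => hgii _ _)
    have hsum2 : ∑ k ∈ Finset.range N, (Real.exp (A (u (k+1))) - Real.exp (A (u k)))
        = Real.exp (A b) - 1 := by
      rw [Finset.sum_range_sub (fun k => Real.exp (A (u k)))]
      have : A (u 0) = 0 := by rw [hu0]; simp [hA]
      rw [huN, this, Real.exp_zero]
    have hXsum : X = ∑ k ∈ Finset.range N,
        ((∫ s in u k..u (k+1), α s * Real.exp (A s))
          - (Real.exp (A (u (k+1))) - Real.exp (A (u k)))) := by
      rw [Finset.sum_sub_distrib, hsum1, hsum2]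
    have hterm : ∀ k ∈ Finset.range N,
        |(∫ s in u k..u (k+1), α s * Real.exp (A s))
          - (Real.exp (A (u (k+1))) - Real.exp (A (u k)))|
        ≤ (C * δ) * (Real.exp (A (u (k+1))) - Real.exp (A (u k))) := by
      intro k _
      set p := u k
      set q := u (k+1)
      have hpq : p ≤ q := humono k
      set Lk : ℝ := A q - A p with hLk
      have hLint : Lk = ∫ t in p..q, α t := by
        rw [hLk]; have := aux_primitive_add hm h0 hC a p q; simp only [hA]; linarith
      have hL0 : 0 ≤ Lk := sub_nonneg.2 (hmono hpq)
      have hLδ : Lk ≤ C * δ := by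
        rw [hLint]
        calc ∫ t in p..q, α t ≤ ∫ _t in p..q, C :=
              intervalIntegral.integral_mono_on hpq (auxII hm h0 hC p q)
                intervalIntegrable_const (fun s _ => hC s)
          _ = C * δ := by
              rw [intervalIntegral.integral_const]
              have : q - p = δ := by
                show u (k+1) - u k = δ
                simp only [hu]
                push_cast
                ring
              rw [this, smul_eq_mul, mul_comm]
      set J : ℝ := ∫ s in p..q, α s * Real.exp (A s) with hJ
      set Dk : ℝ := Real.exp (A q) - Real.exp (A p) with hDk
      have hexpq : Real.exp (A q) = Real.exp (A p) * Real.exp Lk := by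
        rw [← Real.exp_add]; congr 1; rw [hLk]; ring
      have hJl : Real.exp (A p) * Lk ≤ J := by
        rw [hJ, hLint, ← intervalIntegral.integral_const_mul]
        apply intervalIntegral.integral_mono_on hpq
          ((auxII hm h0 hC p q).const_mul _) (hgii p q)
        intro s hs
        have : A p ≤ A s := hmono hs.1
        have := Real.exp_le_exp.2 this
        nlinarith [h0 s]
      have hJu : J ≤ Real.exp (A q) * Lk := by
        rw [hJ, hLint, ← intervalIntegral.integral_const_mul]
        apply intervalIntegral.integral_mono_on hpq (hgii p q)
          ((auxII hm h0 hC p q).const_mul _)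
        intro s hs
        have : A s ≤ A q := hmono hs.2
        have := Real.exp_le_exp.2 this
        nlinarith [h0 s]
      have hDl : Real.exp (A p) * Lk ≤ Dk := by
        rw [hDk, hexpq]
        nlinarith [Real.add_one_le_exp Lk, Real.exp_pos (A p)]
      have hDu : Dk ≤ Real.exp (A q) * Lk := by
        have h1 := Real.add_one_le_exp (-Lk)
        rw [Real.exp_neg] at h1
        have h2 := mul_le_mul_of_nonneg_right h1 (Real.exp_pos Lk).le
        rw [inv_mul_cancel₀ (Real.exp_pos Lk).ne'] at h2
        rw [hDk, hexpq]
        nlinarith [Real.exp_pos (A p)]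
      have hD0 : 0 ≤ Dk := le_trans (by positivity) hDl
      have hwidth : Real.exp (A q) * Lk - Real.exp (A p) * Lk = Lk * Dk := by
        rw [hDk]; ring
      rw [abs_le]
      constructor
      · nlinarith
      · nlinarith
    calc |X| ≤ ∑ k ∈ Finset.range N,
          |(∫ s in u k..u (k+1), α s * Real.exp (A s))
            - (Real.exp (A (u (k+1))) - Real.exp (A (u k)))| := by
          rw [hXsum]; exact Finset.abs_sum_le_sum_abs _ _
      _ ≤ ∑ k ∈ Finset.range N,
          (C * δ) * (Real.exp (A (u (k+1))) - Real.exp (A (u k))) :=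
          Finset.sum_le_sum hterm
      _ = (C * δ) * (Real.exp (A b) - 1) := by rw [← Finset.mul_sum, hsum2]
      _ ≤ C * (b - a) * Real.exp (A b) / N := by
          rw [hδ]
          have h1 : Real.exp (A b) - 1 ≤ Real.exp (A b) := by linarith
          have hAb0 : (0:ℝ) ≤ A b := by
            have h3 := hmono hab
            have h4 : A a = 0 := by simp [hA]
            simp only at h3
            linarith
          have h2 : (1:ℝ) ≤ Real.exp (A b) := Real.one_le_exp hAb0
          rw [show C * ((b - a) / ↑N) * (Real.exp (A b) - 1)
              = C * (b - a) * (Real.exp (A b) - 1) / ↑N from by ring]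
          rw [div_le_div_iff_of_pos_right hNpos]
          nlinarith [mul_nonneg hC0 (sub_nonneg.2 hab)]
  have hX0 : |X| ≤ 0 := by
    refine ge_of_tendsto (tendsto_const_div_atTop_nhds_zero_nat
      (C * (b - a) * Real.exp (A b))) ?_
    exact eventually_atTop.2 ⟨1, key⟩
  have : X = 0 := abs_nonpos_iff.mp hX0
  rw [hX] at this
  linarith


lemma core_exp2 (hm : Measurable α) (h0 : ∀ t, 0 ≤ α t) (hC : ∀ t, α t ≤ C)
    {a u b : ℝ} (hau : a ≤ u) (hub : u ≤ b) :
    ∫ s in u..b, α s * Real.exp (∫ t in a..s, α t)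
      = Real.exp (∫ t in a..b, α t) - Real.exp (∫ t in a..u, α t) := by
  have hsplit : ∀ s : ℝ, (∫ t in a..s, α t) = (∫ t in a..u, α t) + ∫ t in u..s, α t :=
    fun s => (aux_primitive_add hm h0 hC a u s).symm
  have h1 : ∫ s in u..b, α s * Real.exp (∫ t in a..s, α t)
      = ∫ s in u..b, Real.exp (∫ t in a..u, α t) * (α s * Real.exp (∫ t in u..s, α t)) := by
    apply intervalIntegral.integral_congr
    intro s _
    simp only
    rw [hsplit s, Real.exp_add]
    ring
  rw [h1, intervalIntegral.integral_const_mul, core_exp hm h0 hC hub, hsplit b, Real.exp_add]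
  ring

end aux


theorem stmt13 (n : ℕ) (hn : 1 ≤ n) (abar hbar : ℝ) (habar : 0 ≤ abar) (hhbar : 0 ≤ hbar)
    (a h : Fin n → Fin n → ℝ → ℝ)
    (ha : GoodWeights n abar a) (hh : GoodDelays n hbar h)
    (t0 : ℝ) (ht0 : 0 ≤ t0) (x D : ℝ → Fin n → ℝ)
    (hx : IsSolIneq n a h hbar t0 x D)
    (τ T L δ₀ ε M' : ℝ) (hτ : t0 ≤ τ) (hT : τ < T) (hδ₀ : 0 < δ₀) (hε : 0 < ε)
    (hM' : 0 ≤ M') (i j : Fin n)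
    (hbound : ∀ l : Fin n, ∀ s ∈ Ici (τ - hbar), x s l ≤ L)
    (hiL : ∀ s ∈ Icc (τ - hbar) T, x s i ≤ L - δ₀)
    (hji : ε ≤ ∫ t in τ..T, a j i t)
    (hα : (∫ t in τ..T, ∑ l : Fin n, a j l t) ≤ M') :
    x T j ≤ L - δ₀ * ε * Real.exp (-M') := by
  obtain ⟨haM, haB, haD⟩ := ha
  obtain ⟨hhM, hhB, hhD⟩ := hh
  obtain ⟨hLB, hDint, hxrep, hineq⟩ := hx
  have hτ0 : (0:ℝ) ≤ τ := le_trans ht0 hτ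
  have hTle : τ ≤ T := hT.le
  set C : ℝ := n * abar with hCdef
  set α : ℝ → ℝ := fun t => if 0 ≤ t then ∑ l, a j l t else 0 with hαdef
  have hαm : Measurable α := by
    apply Measurable.ite measurableSet_Ici
    · exact Finset.measurable_sum _ (fun l _ => haM j l)
    · exact measurable_const
  have hα0 : ∀ t, 0 ≤ α t := by
    intro t
    by_cases h' : (0:ℝ) ≤ t
    · simp only [hαdef, if_pos h']
      exact Finset.sum_nonneg fun l _ => (haB j l t h').1
    · simp [hαdef, h']
  have hαC : ∀ t, α t ≤ C := by
    intro t
    by_cases h' : (0:ℝ) ≤ t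
    · simp only [hαdef, if_pos h']
      calc ∑ l, a j l t ≤ ∑ _l : Fin n, abar :=
            Finset.sum_le_sum fun l _ => (haB j l t h').2
        _ = n * abar := by simp [Finset.sum_const, Finset.card_univ]
    · simp only [hαdef, if_neg h']
      positivity
  have hαeq : ∀ t, 0 ≤ t → α t = ∑ l, a j l t := fun t ht => by
    simp only [hαdef, if_pos ht]
  set A : ℝ → ℝ := fun s => ∫ t in τ..s, α t with hAdef
  set E : ℝ → ℝ := fun s => Real.exp (A s) with hEdef
  have hAmono : Monotone A := aux_mono hαm hα0 hαC τ
  have hEcont : Continuous E := Real.continuous_exp.comp (aux_cont hαm hα0 hαC τ)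
  have hATM : A T ≤ M' := by
    have h1 : A T = ∫ t in τ..T, ∑ l, a j l t := by
      apply intervalIntegral.integral_congr
      intro t ht
      rw [Set.uIcc_of_le hTle] at ht
      exact hαeq t (le_trans hτ0 ht.1)
    rw [h1]; exact hα
  -- integrability of D j and the modified f
  have hDII : ∀ p q : ℝ, t0 ≤ p → t0 ≤ q →
      IntervalIntegrable (fun s => D s j) volume p q := by
    intro p q hp hq
    rw [intervalIntegrable_iff]
    apply (hDint j (max p q)).mono_set
    intro s hs
    rw [Set.mem_uIoc] at hs
    constructor
    · rcases hs with h' | h'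
      · exact le_trans hp h'.1.le
      · exact le_trans hq h'.1.le
    · rcases hs with h' | h'
      · exact le_trans h'.2 (le_max_right p q)
      · exact le_trans h'.2 (le_max_left p q)
  set f : ℝ → ℝ := Set.indicator (Ici t0) (fun s => -(D s j)) with hfdef
  have hfII : ∀ p q : ℝ, IntervalIntegrable f volume p q := by
    intro p q
    rw [intervalIntegrable_iff]
    have base : IntegrableOn (fun s => -(D s j)) (Icc t0 (max p q)) := (hDint j (max p q)).neg
    rw [hfdef, IntegrableOn, integrable_indicator_iff measurableSet_Ici, IntegrableOn,
      Measure.restrict_restrict measurableSet_Ici]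
    have hsub : Ici t0 ∩ Set.uIoc p q ⊆ Icc t0 (max p q) := by
      intro s hs
      rw [Set.mem_inter_iff, Set.mem_Ici, Set.mem_uIoc] at hs
      refine ⟨hs.1, ?_⟩
      rcases hs.2 with h' | h'
      · exact le_trans h'.2 (le_max_right p q)
      · exact le_trans h'.2 (le_max_left p q)
    exact base.mono_set hsub
  have hfeq : ∀ s, t0 ≤ s → f s = -(D s j) := fun s hs => by
    rw [hfdef, Set.indicator_of_mem (Set.mem_Ici.mpr hs)]
  -- representation of x j
  have hxrepτ : ∀ t, τ ≤ t → x t j = x τ j - ∫ s in τ..t, f s := by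
    intro t ht
    have h1 := hxrep j t (le_trans hτ ht)
    have h2 := hxrep j τ hτ
    have h3 : (∫ s in t0..τ, D s j) + ∫ s in τ..t, D s j = ∫ s in t0..t, D s j :=
      integral_add_adjacent_intervals (hDII t0 τ le_rfl hτ) (hDII τ t hτ (le_trans hτ ht))
    have h4 : ∫ s in τ..t, f s = - ∫ s in τ..t, D s j := by
      rw [show (∫ s in τ..t, f s) = ∫ s in τ..t, -(D s j) from
        intervalIntegral.integral_congr (fun s hs => by
          rw [Set.uIcc_of_le ht] at hs
          exact hfeq s (le_trans hτ hs.1))]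
      exact intervalIntegral.integral_neg
    rw [h4] at *
    linarith
  set Z : ℝ → ℝ := fun t => (L - x τ j) + ∫ s in τ..t, f s with hZdef
  have hZcont : Continuous Z :=
    continuous_const.add (intervalIntegral.continuous_primitive hfII τ)
  have hZx : ∀ t, τ ≤ t → Z t = L - x t j := by
    intro t ht
    rw [hZdef]
    simp only
    rw [hxrepτ t ht]
    ring
  have hZnn : ∀ t, τ ≤ t → 0 ≤ Z t := by
    intro t ht
    rw [hZx t ht]
    have := hbound j t (by simp only [mem_Ici]; linarith)
    linarith
  have hZτ : Z τ = L - x τ j := by simp [hZdef]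
  have hZT : Z T = Z τ + ∫ s in τ..T, f s := by simp [hZdef, hZτ]
  -- interval integrability package
  have hgII := aux_gII hαm hα0 hαC τ
  have hEfII : IntervalIntegrable (fun s => E s * f s) volume τ T :=
    (hfII τ T).continuousOn_mul hEcont.continuousOn
  have hgZII : IntervalIntegrable (fun s => (α s * E s) * Z s) volume τ T :=
    (hgII τ T).mul_continuousOn hZcont.continuousOn
  have hgZτII : IntervalIntegrable (fun s => (α s * E s) * (Z s - Z τ)) volume τ T :=
    (hgII τ T).mul_continuousOn (hZcont.sub continuous_const).continuousOn
  -- Fubini step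
  have hgIntOn : IntegrableOn (fun s => α s * E s) (Ioc τ T) := by
    have h1 := hgII τ T
    rw [intervalIntegrable_iff, Set.uIoc_of_le hTle] at h1
    exact h1
  have hfIntOn : IntegrableOn f (Ioc τ T) := by
    have h1 := hfII τ T
    rw [intervalIntegrable_iff, Set.uIoc_of_le hTle] at h1
    exact h1
  have hFub : ∫ s in τ..T, (α s * E s) * (Z s - Z τ)
      = ∫ u in τ..T, f u * (E T - E u) := by
    set K : ℝ → ℝ → ℝ := fun s u => if u ≤ s then (α s * E s) * f u else 0 with hK
    have hKint : Integrable (Function.uncurry K)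
        ((volume.restrict (Ioc τ T)).prod (volume.restrict (Ioc τ T))) := by
      have base : Integrable (fun p : ℝ × ℝ => (α p.1 * E p.1) * f p.2)
          ((volume.restrict (Ioc τ T)).prod (volume.restrict (Ioc τ T))) :=
        hgIntOn.mul_prod hfIntOn
      have hKi : Function.uncurry K
          = Set.indicator {p : ℝ × ℝ | p.2 ≤ p.1}
            (fun p => (α p.1 * E p.1) * f p.2) := by
        funext p
        by_cases h' : p.2 ≤ p.1
        · simp only [Function.uncurry, hK, if_pos h', Set.indicator_apply,
            Set.mem_setOf_eq, h', if_true]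
        · simp only [Function.uncurry, hK, if_neg h', Set.indicator_apply,
            Set.mem_setOf_eq, h', if_false]
      rw [hKi]
      exact base.indicator (measurableSet_le measurable_snd measurable_fst)
    have hL : ∫ s in τ..T, (α s * E s) * (Z s - Z τ)
        = ∫ s in Ioc τ T, (∫ u in Ioc τ T, K s u) := by
      rw [intervalIntegral.integral_of_le hTle]
      apply setIntegral_congr_fun measurableSet_Ioc
      intro s hs
      show (α s * E s) * (Z s - Z τ) = ∫ u in Ioc τ T, K s u
      have e1 : (fun u => K s u) = Set.indicator (Iic s) (fun u => (α s * E s) * f u) := by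
        funext u
        by_cases h' : u ≤ s
        · simp only [hK, if_pos h', Set.indicator_apply, Set.mem_Iic, h', if_true]
        · simp only [hK, if_neg h', Set.indicator_apply, Set.mem_Iic, h', if_false]
      have e2 : Iic s ∩ Ioc τ T = Ioc τ s := by
        ext u
        simp only [Set.mem_inter_iff, Set.mem_Iic, Set.mem_Ioc]
        constructor
        · rintro ⟨h1, h2, h3⟩; exact ⟨h2, h1⟩
        · rintro ⟨h1, h2⟩; exact ⟨h2, h1, le_trans h2 hs.2⟩
      rw [e1, MeasureTheory.integral_indicator measurableSet_Iic,
        Measure.restrict_restrict measurableSet_Iic, e2, MeasureTheory.integral_const_mul]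
      have e3 : Z s - Z τ = ∫ u in Ioc τ s, f u := by
        have e4 : Z s - Z τ = ∫ u in τ..s, f u := by simp [hZdef]
        rw [e4, intervalIntegral.integral_of_le hs.1.le]
      rw [e3]
    have hR : ∫ u in τ..T, f u * (E T - E u)
        = ∫ u in Ioc τ T, (∫ s in Ioc τ T, K s u) := by
      rw [intervalIntegral.integral_of_le hTle]
      apply setIntegral_congr_fun measurableSet_Ioc
      intro u hu
      show f u * (E T - E u) = ∫ s in Ioc τ T, K s u
      have e1 : (fun s => K s u) = Set.indicator (Ici u) (fun s => (α s * E s) * f u) := by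
        funext s'
        by_cases h' : u ≤ s'
        · simp only [hK, if_pos h', Set.indicator_apply, Set.mem_Ici, h', if_true]
        · simp only [hK, if_neg h', Set.indicator_apply, Set.mem_Ici, h', if_false]
      have e2 : Ici u ∩ Ioc τ T = Icc u T := by
        ext s'
        simp only [Set.mem_inter_iff, Set.mem_Ici, Set.mem_Ioc, Set.mem_Icc]
        constructor
        · rintro ⟨h1, h2, h3⟩; exact ⟨h1, h3⟩
        · rintro ⟨h1, h2⟩; exact ⟨h1, lt_of_lt_of_le hu.1 h1, h2⟩
      rw [e1, MeasureTheory.integral_indicator measurableSet_Ici,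
        Measure.restrict_restrict measurableSet_Ici, e2,
        integral_Icc_eq_integral_Ioc, ← intervalIntegral.integral_of_le hu.2,
        intervalIntegral.integral_mul_const]
      have e3 : (∫ s in u..T, α s * E s) = E T - E u := by
        have h5 := core_exp2 hαm hα0 hαC hu.1.le hu.2
        simpa [hEdef, hAdef] using h5
      rw [e3]
      ring
    rw [hL, hR]
    exact MeasureTheory.integral_integral_swap hKint
  -- the identity
  have hident : ∫ s in τ..T, E s * (f s + α s * Z s) = E T * Z T - Z τ := by
    have e1 : ∫ s in τ..T, E s * (f s + α s * Z s)
        = (∫ s in τ..T, E s * f s) + ∫ s in τ..T, (α s * E s) * Z s := by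
      rw [← intervalIntegral.integral_add hEfII hgZII]
      apply intervalIntegral.integral_congr
      intro s _
      simp only
      ring
    have e2 : ∫ s in τ..T, (α s * E s) * Z s
        = (∫ s in τ..T, (α s * E s) * (Z s - Z τ)) + Z τ * (E T - 1) := by
      have e21 : ∫ s in τ..T, (α s * E s) * Z s
          = (∫ s in τ..T, (α s * E s) * (Z s - Z τ)) + ∫ s in τ..T, Z τ * (α s * E s) := by
        rw [← intervalIntegral.integral_add hgZτII ((hgII τ T).const_mul _)]
        apply intervalIntegral.integral_congr
        intro s _
        simp only
        ring
      have e22 : ∫ s in τ..T, Z τ * (α s * E s) = Z τ * (E T - 1) := by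
        rw [intervalIntegral.integral_const_mul]
        congr 1
        have : A τ = 0 := by simp [hAdef]
        have h := core_exp hαm hα0 hαC hTle
        simpa [hEdef, hAdef] using h
      rw [e21, e22]
    have e3 : ∫ u in τ..T, f u * (E T - E u)
        = E T * (∫ s in τ..T, f s) - ∫ s in τ..T, E s * f s := by
      have : ∫ u in τ..T, f u * (E T - E u)
          = (∫ u in τ..T, E T * f u) - ∫ u in τ..T, E u * f u := by
        rw [← intervalIntegral.integral_sub (((hfII τ T).const_mul _))
          (((hfII τ T).continuousOn_mul hEcont.continuousOn))]
        apply intervalIntegral.integral_congr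
        intro s _
        simp only
        ring
      rw [this, intervalIntegral.integral_const_mul]
    rw [e1, e2, hFub, e3, hZT]
    ring
  -- pointwise a.e. inequality
  have hae : ∀ᵐ s : ℝ ∂(volume.restrict (Ioc τ T)),
      δ₀ * a j i s ≤ E s * (f s + α s * Z s) := by
    rw [ae_restrict_iff' measurableSet_Ioc]
    filter_upwards [hineq] with s hs hsmem
    have hsτ : τ ≤ s := hsmem.1.le
    have hs0 : (0:ℝ) ≤ s := le_trans hτ0 hsτ
    have hst0 : t0 ≤ s := le_trans hτ hsτ
    have hD := hs hst0 j
    have hZs : Z s = L - x s j := hZx s hsτ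
    have hterm : ∀ l : Fin n, a j l s * (x (s - h j l s) l - x s j)
        ≤ a j l s * (L - x s j) - (if l = i then δ₀ * a j i s else 0) := by
      intro l
      have ha0 : 0 ≤ a j l s := (haB j l s hs0).1
      have hh1 : 0 ≤ h j l s := (hhB j l s hs0).1
      have hh2 : h j l s ≤ hbar := (hhB j l s hs0).2
      by_cases hl : l = i
      · subst hl
        have hx1 : x (s - h j l s) l ≤ L - δ₀ :=
          hiL _ ⟨by linarith, by linarith [hsmem.2]⟩
        rw [if_pos rfl]
        nlinarith [mul_le_mul_of_nonneg_left
          (show x (s - h j l s) l - x s j ≤ (L - δ₀) - x s j by linarith) ha0]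
      · have hx1 : x (s - h j l s) l ≤ L :=
          hbound l _ (by rw [Set.mem_Ici]; linarith)
        rw [if_neg hl]
        nlinarith [mul_le_mul_of_nonneg_left
          (show x (s - h j l s) l - x s j ≤ L - x s j by linarith) ha0]
    have hsum := Finset.sum_le_sum (fun l (_ : l ∈ Finset.univ) => hterm l)
    rw [Finset.sum_sub_distrib, Finset.sum_ite_eq' Finset.univ i
      (fun _ => δ₀ * a j i s)] at hsum
    simp only [Finset.mem_univ, if_pos] at hsum
    have hfs : f s = -(D s j) := hfeq s hst0
    have hsum2 : (∑ l, a j l s * (L - x s j)) = α s * Z s := by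
      rw [hαeq s hs0, hZs, Finset.sum_mul]
    have hbase : δ₀ * a j i s ≤ f s + α s * Z s := by
      rw [hfs, ← hsum2]
      linarith
    have haji0 : 0 ≤ δ₀ * a j i s := mul_nonneg hδ₀.le (haB j i s hs0).1
    have hAs0 : 0 ≤ A s := by
      have h1 : A τ = 0 := by simp [hAdef]
      have h2 := hAmono hsτ
      linarith
    have hE1 : 1 ≤ E s := Real.one_le_exp hAs0
    nlinarith
  -- integrability over Ioc τ T
  have haji_int : IntegrableOn (fun s => δ₀ * a j i s) (Ioc τ T) := by
    apply Measure.integrableOn_of_bounded (M := δ₀ * abar) measure_Ioc_lt_top.ne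
      ((haM j i).const_mul δ₀).aestronglyMeasurable
    rw [ae_restrict_iff' measurableSet_Ioc]
    filter_upwards with s hs
    have hs0 : (0:ℝ) ≤ s := le_trans hτ0 hs.1.le
    have := haB j i s hs0
    rw [Real.norm_eq_abs, abs_of_nonneg (by nlinarith [this.1])]
    nlinarith [this.2]
  have hbig_int : IntegrableOn (fun s => E s * (f s + α s * Z s)) (Ioc τ T) := by
    have h1 : IntervalIntegrable (fun s => E s * (f s + α s * Z s)) volume τ T := by
      have heq : (fun s => E s * (f s + α s * Z s))
          = fun s => E s * f s + (α s * E s) * Z s := funext fun s => by ring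
      rw [heq]
      exact hEfII.add hgZII
    rw [intervalIntegrable_iff, Set.uIoc_of_le hTle] at h1
    exact h1
  -- putting it together
  have hchain : δ₀ * ε ≤ E T * Z T - Z τ := by
    have h1 : δ₀ * ε ≤ ∫ s in Ioc τ T, δ₀ * a j i s := by
      rw [← intervalIntegral.integral_of_le hTle, intervalIntegral.integral_const_mul]
      nlinarith
    have h2 : (∫ s in Ioc τ T, δ₀ * a j i s)
        ≤ ∫ s in Ioc τ T, E s * (f s + α s * Z s) :=
      setIntegral_mono_ae_restrict haji_int hbig_int hae
    have h3 : ∫ s in Ioc τ T, E s * (f s + α s * Z s) = E T * Z T - Z τ := by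
      rw [← intervalIntegral.integral_of_le hTle]
      exact hident
    linarith
  have hZτ0 : 0 ≤ Z τ := hZnn τ le_rfl
  have hZT0 : 0 ≤ Z T := hZnn T hTle
  have hET : E T ≤ Real.exp M' := Real.exp_le_exp.2 hATM
  have h1 : δ₀ * ε ≤ Real.exp M' * Z T := by
    have := mul_le_mul_of_nonneg_right hET hZT0
    linarith
  have h2 : Real.exp M' * Real.exp (-M') = 1 := by
    rw [← Real.exp_add]; simp
  have hfinal : δ₀ * ε * Real.exp (-M') ≤ Z T := by
    nlinarith [mul_le_mul_of_nonneg_right h1 (Real.exp_pos (-M')).le]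
  have := hZx T hTle
  linarith
end

section
/- Comparison principle: let x be a solution of the delayed consensus equation on [t₀,∞) and y a solution of the delayed consensus inequality on [t₀,∞) (with the same weights a_{ij} and delays h_{ij}), and suppose y(s) = x(s) for all s ∈ [t₀−h̄, t₀]. Then y_i(t) ≤ x_i(t) for every i ∈ [1:n] and every t ≥ t₀. -/
open MeasureTheory Set Filter intervalIntegral

set_option maxHeartbeats 1000000 in
theorem stmt14 (n : ℕ) (hn : 1 ≤ n) (abar hbar : ℝ) (habar : 0 ≤ abar) (hhbar : 0 ≤ hbar)
    (a h : Fin n → Fin n → ℝ → ℝ)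
    (ha : GoodWeights n abar a) (hh : GoodDelays n hbar h)
    (t0 : ℝ) (ht0 : 0 ≤ t0)
    (x Dx y Dy : ℝ → Fin n → ℝ)
    (hx : IsSolEq n a h hbar t0 x Dx)
    (hy : IsSolIneq n a h hbar t0 y Dy)
    (hinit : ∀ s ∈ Icc (t0 - hbar) t0, ∀ i : Fin n, y s i = x s i) :
    ∀ i : Fin n, ∀ t : ℝ, t0 ≤ t → y t i ≤ x t i := by
  obtain ⟨haM, habd, hadiag⟩ := ha
  obtain ⟨hhM, hhbd, hhdiag⟩ := hh
  obtain ⟨hxb, hxint, hxrep, hxode⟩ := hx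
  obtain ⟨hyb, hyint, hyrep, hyode⟩ := hy
  haveI : NeZero n := ⟨by omega⟩
  set z : ℝ → Fin n → ℝ := fun t i => y t i - x t i with hzdef
  set D : ℝ → Fin n → ℝ := fun t i => Dy t i - Dx t i with hDdef
  have hz0 : ∀ s ∈ Icc (t0 - hbar) t0, ∀ i : Fin n, z s i = 0 := by
    intro s hs i; simp only [hzdef]; rw [hinit s hs i]; ring
  have hDint : ∀ (i : Fin n) (T : ℝ), IntegrableOn (fun s => D s i) (Icc t0 T) :=
    fun i T => (hyint i T).sub (hxint i T)
  have hIv : ∀ (F : ℝ → Fin n → ℝ), (∀ (i : Fin n) (T : ℝ), IntegrableOn (fun s => F s i) (Icc t0 T)) →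
      ∀ (i : Fin n) (σ τ : ℝ), t0 ≤ σ → t0 ≤ τ → IntervalIntegrable (fun s => F s i) volume σ τ := by
    intro F hF i σ τ hσ hτ
    rw [intervalIntegrable_iff]
    exact (hF i (max σ τ)).mono_set (fun s hs => ⟨((le_min hσ hτ).trans_lt hs.1).le, hs.2⟩)
  have hzrep : ∀ (i : Fin n) (t : ℝ), t0 ≤ t → z t i = ∫ s in t0..t, D s i := by
    intro i t ht
    have hsub : (∫ s in t0..t, (Dy s i - Dx s i)) = (∫ s in t0..t, Dy s i) - ∫ s in t0..t, Dx s i :=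
      intervalIntegral.integral_sub (hIv Dy hyint i t0 t le_rfl ht) (hIv Dx hxint i t0 t le_rfl ht)
    have h0 : y t0 i = x t0 i := hinit t0 ⟨by linarith, le_rfl⟩ i
    have hy' := hyrep i t ht
    have hx' := hxrep i t ht
    simp only [hzdef, hDdef]
    rw [hy', hx', h0, hsub]
    ring
  have hzcont : ∀ (i : Fin n) (T : ℝ), t0 ≤ T → ContinuousOn (fun t => z t i) (Icc t0 T) := by
    intro i T hT
    have h1 : ContinuousOn (fun t => ∫ s in t0..t, D s i) (Icc t0 T) := by
      have h2 := continuousOn_primitive_interval (f := fun s => D s i) (a := t0) (b := T)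
        (μ := volume) (by rw [uIcc_of_le hT]; exact hDint i T)
      rwa [uIcc_of_le hT] at h2
    exact h1.congr (fun t htm => hzrep i t htm.1)
  have hode : ∀ᵐ t : ℝ ∂volume, t0 ≤ t → ∀ i : Fin n,
      D t i ≤ ∑ j : Fin n, a i j t * (z (t - h i j t) j - z t i) := by
    filter_upwards [hxode, hyode] with t hxo hyo
    intro ht i
    have e1 := hxo ht i
    have e2 := hyo ht i
    have hsum : ∑ j : Fin n, a i j t * ((y (t - h i j t) j - x (t - h i j t) j) - (y t i - x t i))
        = (∑ j : Fin n, a i j t * (y (t - h i j t) j - y t i))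
          - ∑ j : Fin n, a i j t * (x (t - h i j t) j - x t i) := by
      rw [← Finset.sum_sub_distrib]
      exact Finset.sum_congr rfl fun j _ => by ring
    simp only [hzdef, hDdef]
    rw [hsum]
    linarith
  -- the step size
  have hden : (0:ℝ) < 2 * (n:ℝ) * abar + 1 := by
    have : (0:ℝ) ≤ (n:ℝ) * abar := mul_nonneg (Nat.cast_nonneg n) habar
    nlinarith
  set δ : ℝ := 1 / (2 * (n:ℝ) * abar + 1) with hδdef
  have hδpos : 0 < δ := by rw [hδdef]; exact one_div_pos.mpr hden
  have hδhalf : (n:ℝ) * abar * δ ≤ 1 / 2 := by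
    rw [hδdef, mul_one_div, div_le_div_iff₀ hden (by norm_num : (0:ℝ) < 2)]
    nlinarith
  -- the key step
  have key : ∀ T : ℝ, t0 ≤ T → (∀ j : Fin n, ∀ s ∈ Icc (t0 - hbar) T, z s j ≤ 0) →
      ∀ i : Fin n, ∀ t ∈ Icc T (T + δ), z t i ≤ 0 := by
    intro T hT ih
    set U : Set ℝ := {r : ℝ | ∃ i : Fin n, ∃ s, s ∈ Icc T (T + δ) ∧ r = max (z s i) 0} with hUdef
    have hUne : U.Nonempty := ⟨max (z T ⟨0, by omega⟩) 0, ⟨0, by omega⟩, T, ⟨le_refl T, by linarith⟩, rfl⟩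
    obtain ⟨Cx, hCx⟩ := hxb (T + δ)
    obtain ⟨Cy, hCy⟩ := hyb (T + δ)
    have hUbdd : BddAbove U := by
      refine ⟨Cy + Cx, ?_⟩
      rintro r ⟨i, s, hs, rfl⟩
      have hs' : s ∈ Icc (t0 - hbar) (T + δ) := ⟨by linarith [hs.1], hs.2⟩
      have h1 := hCy i s hs'
      have h2 := hCx i s hs'
      have hC0 : (0:ℝ) ≤ Cy + Cx := by
        have := abs_nonneg (y s i); have := abs_nonneg (x s i); linarith
      refine max_le ?_ hC0
      simp only [hzdef]
      have := le_abs_self (y s i)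
      have := neg_abs_le (x s i)
      linarith
    set u : ℝ := sSup U with hudef
    have hu0 : 0 ≤ u := by
      refine le_trans (le_max_right (z T ⟨0, by omega⟩) 0) (le_csSup hUbdd ?_)
      exact ⟨⟨0, by omega⟩, T, ⟨le_refl T, by linarith⟩, rfl⟩
    have hbound : ∀ i : Fin n, ∀ t ∈ Icc T (T + δ), z t i ≤ (n:ℝ) * abar * u * δ := by
      intro i t ht
      have hnn : 0 ≤ (n:ℝ) * abar * u * δ :=
        mul_nonneg (mul_nonneg (mul_nonneg (Nat.cast_nonneg n) habar) hu0) hδpos.le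
      rcases le_or_gt (z t i) 0 with hc | hc
      · linarith
      set S : Set ℝ := Icc T t ∩ (fun s => z s i) ⁻¹' Iic 0 with hSdef
      have hScl : IsClosed S := by
        have hcz : ContinuousOn (fun s => z s i) (Icc T t) :=
          (hzcont i (T + δ) (by linarith)).mono (Icc_subset_Icc hT ht.2)
        exact hcz.preimage_isClosed_of_isClosed isClosed_Icc isClosed_Iic
      have hSne : S.Nonempty := ⟨T, ⟨le_refl T, ht.1⟩, ih i T ⟨by linarith, le_refl T⟩⟩
      have hSbdd : BddAbove S := ⟨t, fun s hs => hs.1.2⟩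
      set σ : ℝ := sSup S with hσdef
      have hσmem : σ ∈ S := hScl.csSup_mem hSne hSbdd
      have hσ1 : T ≤ σ := hσmem.1.1
      have hσt : σ ≤ t := hσmem.1.2
      have hσz : z σ i ≤ 0 := hσmem.2
      have hσ0 : t0 ≤ σ := le_trans hT hσ1
      have htt0 : t0 ≤ t := le_trans hσ0 hσt
      have hpos : ∀ s, σ < s → s ≤ t → 0 < z s i := by
        intro s h1 h2
        by_contra hcon; push_neg at hcon
        have hsS : s ∈ S := ⟨⟨le_trans hσ1 h1.le, h2⟩, hcon⟩
        exact absurd (le_csSup hSbdd hsS) (not_le.mpr h1)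
      have hadd : (∫ s in t0..σ, D s i) + ∫ s in σ..t, D s i = ∫ s in t0..t, D s i :=
        intervalIntegral.integral_add_adjacent_intervals
          (hIv D hDint i t0 σ le_rfl hσ0) (hIv D hDint i σ t hσ0 htt0)
      have hsplit : z t i = z σ i + ∫ s in σ..t, D s i := by
        have e1 := hzrep i t htt0
        have e2 := hzrep i σ hσ0
        linarith
      have haein : ∀ᵐ s ∂(volume.restrict (Ioc σ t)), D s i ≤ (n:ℝ) * (abar * u) := by
        filter_upwards [hode.filter_mono (ae_mono Measure.restrict_le_self),
          ae_restrict_mem measurableSet_Ioc] with s hsode hsmem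
        have hst0 : t0 ≤ s := le_trans hσ0 hsmem.1.le
        have hs0 : (0:ℝ) ≤ s := le_trans ht0 hst0
        refine le_trans (hsode hst0 i) ?_
        have hterm : ∀ j ∈ Finset.univ, a i j s * (z (s - h i j s) j - z s i) ≤ abar * u := by
          intro j _
          obtain ⟨ha0, ha1⟩ := habd i j s hs0
          obtain ⟨hh0, hh1⟩ := hhbd i j s hs0
          have hzpos : 0 < z s i := hpos s hsmem.1 hsmem.2
          have hA : z (s - h i j s) j ≤ u := by
            rcases le_or_gt (s - h i j s) T with hc2 | hc2
            · have hle : z (s - h i j s) j ≤ 0 := ih j _ ⟨by linarith, hc2⟩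
              linarith
            · have hmemU : max (z (s - h i j s) j) 0 ∈ U :=
                ⟨j, s - h i j s, ⟨hc2.le, by linarith [hsmem.2, ht.2]⟩, rfl⟩
              exact le_trans (le_max_left _ _) (le_csSup hUbdd hmemU)
          rcases le_or_gt (z (s - h i j s) j) 0 with hc2 | hc2
          · have h1 : a i j s * (z (s - h i j s) j - z s i) ≤ 0 :=
              mul_nonpos_of_nonneg_of_nonpos ha0 (by linarith)
            have h2 : (0:ℝ) ≤ abar * u := mul_nonneg habar hu0
            linarith
          · have h1 : a i j s * (z (s - h i j s) j - z s i) ≤ a i j s * z (s - h i j s) j := by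
              have := mul_nonneg ha0 hzpos.le
              nlinarith
            have h2 : a i j s * z (s - h i j s) j ≤ abar * u :=
              mul_le_mul ha1 hA hc2.le habar
            linarith
        refine le_trans (Finset.sum_le_sum hterm) ?_
        rw [Finset.sum_const, Finset.card_univ, Fintype.card_fin, nsmul_eq_mul]
      have hint1 : IntegrableOn (fun s => D s i) (Ioc σ t) :=
        (hDint i t).mono_set (fun s hs => ⟨le_trans hσ0 hs.1.le, hs.2⟩)
      have hint2 : IntegrableOn (fun _ : ℝ => (n:ℝ) * (abar * u)) (Ioc σ t) :=
        integrableOn_const measure_Ioc_lt_top.ne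
      have hmono : (∫ s in Ioc σ t, D s i) ≤ ∫ s in Ioc σ t, (n:ℝ) * (abar * u) :=
        setIntegral_mono_ae_restrict hint1 hint2 haein
      have hconstval : (∫ _ in Ioc σ t, (n:ℝ) * (abar * u)) = (t - σ) * ((n:ℝ) * (abar * u)) := by
        rw [setIntegral_const, Real.volume_real_Ioc_of_le hσt,
          smul_eq_mul]
      have hiv : (∫ s in σ..t, D s i) = ∫ s in Ioc σ t, D s i :=
        intervalIntegral.integral_of_le hσt
      have htσ : t - σ ≤ δ := by linarith [ht.2]
      have hc0 : (0:ℝ) ≤ (n:ℝ) * (abar * u) := mul_nonneg (Nat.cast_nonneg n) (mul_nonneg habar hu0)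
      have hfinal := mul_le_mul_of_nonneg_right htσ hc0
      nlinarith [hsplit, hσz, hmono, hconstval, hiv, hfinal]
    have hu2 : u ≤ 1 / 2 * u := by
      refine csSup_le hUne ?_
      rintro r ⟨i, s, hs, rfl⟩
      have hb := hbound i s hs
      have h3 : (n:ℝ) * abar * u * δ ≤ 1 / 2 * u := by
        have h4 := mul_le_mul_of_nonneg_right hδhalf hu0
        nlinarith
      exact max_le (hb.trans h3) (by linarith)
    have hu_le : u ≤ 0 := by linarith
    intro i t htm
    have h5 : max (z t i) 0 ≤ u := le_csSup hUbdd ⟨i, t, htm, rfl⟩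
    have := le_max_left (z t i) 0
    linarith
  -- induction on intervals
  have main : ∀ k : ℕ, ∀ i : Fin n, ∀ t ∈ Icc (t0 - hbar) (t0 + (k:ℝ) * δ), z t i ≤ 0 := by
    intro k
    induction k with
    | zero =>
      intro i t htm
      simp only [Nat.cast_zero, zero_mul, add_zero] at htm
      exact le_of_eq (hz0 t htm i)
    | succ k ih =>
      intro i t htm
      rcases le_or_gt t (t0 + (k:ℝ) * δ) with hc | hc
      · exact ih i t ⟨htm.1, hc⟩
      · have hkδ : (0:ℝ) ≤ (k:ℝ) * δ := mul_nonneg (Nat.cast_nonneg k) hδpos.le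
        refine key (t0 + (k:ℝ) * δ) (by linarith) (fun j s hs => ih j s hs) i t ⟨hc.le, ?_⟩
        have h6 := htm.2
        push_cast at h6
        linarith
  intro i t ht
  obtain ⟨k, hk⟩ := exists_nat_ge ((t - t0) / δ)
  rw [div_le_iff₀ hδpos] at hk
  have hfin := main k i t ⟨by linarith, by linarith⟩
  simp only [hzdef] at hfin
  linarith
end

section
/- Let x be a solution of the delayed consensus equation on [t₀,∞). Then x is uniformly bounded in terms of its initial data: for every i ∈ [1:n] and every t ≥ t₀, min_{j∈[1:n]} inf_{s∈[t₀−h̄,t₀]} x_j(s) ≤ x_i(t) ≤ max_{j∈[1:n]} sup_{s∈[t₀−h̄,t₀]} x_j(s). -/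
open MeasureTheory Set Filter intervalIntegral

open Topology in
theorem stmt15_upper (n : ℕ) (hn : 1 ≤ n) (abar hbar : ℝ) (habar : 0 ≤ abar) (hhbar : 0 ≤ hbar)
    (a h : Fin n → Fin n → ℝ → ℝ)
    (ha : GoodWeights n abar a) (hh : GoodDelays n hbar h)
    (t0 : ℝ) (ht0 : 0 ≤ t0) (x D : ℝ → Fin n → ℝ)
    (hx : IsSolEq n a h hbar t0 x D) :
    ∀ i : Fin n, ∀ t : ℝ, t0 ≤ t → x t i ≤ Lam n hbar x t0 := by
  haveI : Nonempty (Fin n) := ⟨⟨0, hn⟩⟩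
  obtain ⟨hLB, hDint, hrep, hae⟩ := hx
  set M := Lam n hbar x t0 with hM_def
  set c := (n : ℝ) * abar with hc_def
  have hc0 : (0:ℝ) ≤ c := by positivity
  have hhist : ∀ j : Fin n, ∀ σ ∈ Icc (t0 - hbar) t0, x σ j ≤ M := by
    obtain ⟨C, hC⟩ := hLB t0
    intro j σ hσ
    have h1 : x σ j ≤ sSup ((fun s => x s j) '' Icc (t0 - hbar) t0) := by
      apply le_csSup
      · exact ⟨C, by rintro y ⟨s, hs, rfl⟩; exact (abs_le.mp (hC j s hs)).2⟩
      · exact ⟨σ, hσ, rfl⟩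
    refine h1.trans ?_
    exact le_ciSup (f := fun i : Fin n => sSup ((fun s => x s i) '' Icc (t0 - hbar) t0))
      (Set.Finite.bddAbove (Set.finite_range _)) j
  intro i t ht
  have hcont : ∀ j : Fin n, ContinuousOn (fun s => x s j) (Icc t0 t) := by
    intro j
    have h1 : ContinuousOn (fun s => x t0 j + ∫ u in t0..s, D u j) (Icc t0 t) := by
      apply continuousOn_const.add
      have h2 : IntegrableOn (fun u => D u j) (uIcc t0 t) volume := by
        rw [uIcc_of_le ht]; exact hDint j t
      have := intervalIntegral.continuousOn_primitive_interval h2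
      rwa [uIcc_of_le ht] at this
    exact h1.congr (fun s hs => hrep j s hs.1)
  refine le_of_forall_pos_le_add ?_
  intro ε hε
  by_contra hcon
  push_neg at hcon
  set S : Set ℝ := ⋃ j : Fin n, (Icc t0 t ∩ (fun s => x s j) ⁻¹' Ici (M + ε)) with hS_def
  have hSsub : S ⊆ Icc t0 t := iUnion_subset fun j => inter_subset_left
  have hSclosed : IsClosed S :=
    isClosed_iUnion_of_finite fun j =>
      (hcont j).preimage_isClosed_of_isClosed isClosed_Icc isClosed_Ici
  have hSne : S.Nonempty := ⟨t, mem_iUnion.mpr ⟨i, ⟨⟨ht, le_rfl⟩, hcon.le⟩⟩⟩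
  have hSbdd : BddBelow S := BddBelow.mono hSsub bddBelow_Icc
  set tst := sInf S with htst_def
  have htstS : tst ∈ S := hSclosed.csInf_mem hSne hSbdd
  have htst_mem : tst ∈ Icc t0 t := hSsub htstS
  have htstt : tst ≤ t := htst_mem.2
  have ht0tst : t0 < tst := by
    rcases eq_or_lt_of_le htst_mem.1 with heq | hlt
    · exfalso
      obtain ⟨j, hj⟩ := mem_iUnion.mp htstS
      have hj2 : M + ε ≤ x tst j := hj.2
      have := hhist j t0 ⟨by linarith, le_rfl⟩
      rw [← heq] at hj2
      linarith
    · exact hlt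
  have hbefore : ∀ σ, t0 ≤ σ → σ < tst → ∀ j, x σ j < M + ε := by
    intro σ hσ0 hσt j
    by_contra hge
    push_neg at hge
    have hσS : σ ∈ S := mem_iUnion.mpr ⟨j, ⟨⟨hσ0, hσt.le.trans htstt⟩, hge⟩⟩
    exact absurd (csInf_le hSbdd hσS) (not_le.mpr hσt)
  have hupto : ∀ σ, σ ∈ Icc t0 tst → ∀ j, x σ j ≤ M + ε := by
    intro σ hσ j
    rcases eq_or_lt_of_le hσ.2 with heq | hlt
    · subst heq
      haveI : (𝓝[Ico t0 tst] tst).NeBot := by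
        rw [← mem_closure_iff_nhdsWithin_neBot, closure_Ico (ne_of_lt ht0tst)]
        exact ⟨ht0tst.le, le_rfl⟩
      have htd : Tendsto (fun s => x s j) (𝓝[Ico t0 tst] tst) (𝓝 (x tst j)) := by
        have hcw : ContinuousWithinAt (fun s => x s j) (Icc t0 t) tst :=
          (hcont j) tst htst_mem
        exact hcw.mono (fun s hs => ⟨hs.1, hs.2.le.trans htstt⟩)
      refine le_of_tendsto htd ?_
      filter_upwards [self_mem_nhdsWithin] with s hs
      exact (hbefore s hs.1 hs.2 j).le
    · exact (hbefore σ hσ.1 hlt j).le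
  obtain ⟨k, hk⟩ := mem_iUnion.mp htstS
  have heqk : x tst k = M + ε := le_antisymm (hupto tst ⟨ht0tst.le, le_rfl⟩ k) hk.2
  set t1 := max t0 (tst - (2 * (c + 1))⁻¹) with ht1_def
  have ht1a : t0 ≤ t1 := le_max_left _ _
  have ht1b : t1 < tst := by
    apply max_lt ht0tst
    have : (0:ℝ) < (2 * (c + 1))⁻¹ := by positivity
    linarith
  have ht1c : c * (tst - t1) ≤ 1 / 2 := by
    have h1 : tst - (2 * (c + 1))⁻¹ ≤ t1 := le_max_right _ _
    have h2 : c * (tst - t1) ≤ c * (2 * (c + 1))⁻¹ :=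
      mul_le_mul_of_nonneg_left (by linarith) hc0
    have h3 : c * (2 * (c + 1))⁻¹ ≤ 1 / 2 := by
      rw [mul_inv_le_iff₀ (by positivity)]
      nlinarith
    linarith
  set w : ℝ → ℝ := fun s => (M + ε) - x s k with hw_def
  have hwcont : ContinuousOn w (Icc t0 t) := continuousOn_const.sub (hcont k)
  have hwnn : ∀ s ∈ Icc t0 tst, 0 ≤ w s := fun s hs => sub_nonneg.mpr (hupto s hs k)
  have hII : ∀ u v : ℝ, t0 ≤ u → u ≤ v → v ≤ t →
      IntervalIntegrable (fun s => D s k) volume u v := by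
    intro u v hu huv hv
    apply MeasureTheory.IntegrableOn.intervalIntegrable
    rw [uIcc_of_le huv]
    exact (hDint k t).mono_set (Icc_subset_Icc hu hv)
  have hkey : ∀ τ ∈ Icc t1 tst, w τ ≤ ∫ s in τ..tst, c * w s := by
    intro τ hτ
    have hτ0 : t0 ≤ τ := ht1a.trans hτ.1
    have hτt : τ ≤ t := hτ.2.trans htstt
    have hrep1 := hrep k tst ht0tst.le
    have hrep2 := hrep k τ hτ0
    have hadd : (∫ s in t0..τ, D s k) + ∫ s in τ..tst, D s k = ∫ s in t0..tst, D s k :=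
      intervalIntegral.integral_add_adjacent_intervals
        (hII t0 τ le_rfl hτ0 hτt) (hII τ tst hτ0 hτ.2 htstt)
    have hmono : (∫ s in τ..tst, D s k) ≤ ∫ s in τ..tst, c * w s := by
      apply intervalIntegral.integral_mono_ae_restrict hτ.2 (hII τ tst hτ0 hτ.2 htstt)
      · apply ContinuousOn.intervalIntegrable
        rw [uIcc_of_le hτ.2]
        exact continuousOn_const.mul (hwcont.mono (Icc_subset_Icc hτ0 htstt))
      · filter_upwards [ae_restrict_mem measurableSet_Icc,
          MeasureTheory.ae_restrict_of_ae hae] with s hs hseq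
        have hs0 : t0 ≤ s := hτ0.trans hs.1
        have hs0' : (0:ℝ) ≤ s := ht0.trans hs0
        have hwsnn : 0 ≤ w s := hwnn s ⟨hs0, hs.2⟩
        rw [hseq hs0 k]
        have hterm : ∀ j : Fin n, a k j s * (x (s - h k j s) j - x s k) ≤ a k j s * w s := by
          intro j
          apply mul_le_mul_of_nonneg_left _ (ha.2.1 k j s hs0').1
          have hhj := hh.2.1 k j s hs0'
          have hxj : x (s - h k j s) j ≤ M + ε := by
            rcases lt_or_ge (s - h k j s) t0 with hlt | hge
            · have := hhist j (s - h k j s) ⟨by linarith [hhj.2], hlt.le⟩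
              linarith
            · exact hupto _ ⟨hge, by linarith [hhj.1, hs.2]⟩ j
          show x (s - h k j s) j - x s k ≤ (M + ε) - x s k
          linarith
        calc (∑ j : Fin n, a k j s * (x (s - h k j s) j - x s k))
            ≤ ∑ j : Fin n, a k j s * w s := Finset.sum_le_sum (fun j _ => hterm j)
          _ = (∑ j : Fin n, a k j s) * w s := (Finset.sum_mul _ _ _).symm
          _ ≤ c * w s := by
              apply mul_le_mul_of_nonneg_right _ hwsnn
              calc (∑ j : Fin n, a k j s) ≤ ∑ _j : Fin n, abar :=
                    Finset.sum_le_sum (fun j _ => (ha.2.1 k j s hs0').2)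
                _ = (n : ℝ) * abar := by
                    simp [Finset.sum_const, Finset.card_univ, nsmul_eq_mul]
    have hwτ : w τ = x tst k - x τ k := by
      show (M + ε) - x τ k = x tst k - x τ k
      rw [heqk]
    linarith [hwτ, hrep1, hrep2, hadd, hmono]
  obtain ⟨τm, hτm, hmax⟩ := isCompact_Icc.exists_isMaxOn (nonempty_Icc.mpr ht1b.le)
    (hwcont.mono (Icc_subset_Icc ht1a htstt))
  have hmax' : ∀ σ ∈ Icc t1 tst, w σ ≤ w τm := hmax
  have hWpos : 0 < w τm := by
    have h1 : 0 < w t1 := by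
      have := hbefore t1 ht1a ht1b k
      show 0 < (M + ε) - x t1 k
      linarith
    exact lt_of_lt_of_le h1 (hmax' t1 ⟨le_rfl, ht1b.le⟩)
  have h1 : w τm ≤ ∫ s in τm..tst, c * w s := hkey τm hτm
  have h2 : (∫ s in τm..tst, c * w s) ≤ ∫ s in τm..tst, c * w τm := by
    apply intervalIntegral.integral_mono_on hτm.2
    · apply ContinuousOn.intervalIntegrable
      rw [uIcc_of_le hτm.2]
      exact continuousOn_const.mul
        (hwcont.mono (Icc_subset_Icc (ht1a.trans hτm.1) htstt))
    · exact intervalIntegrable_const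
    · intro s hs
      exact mul_le_mul_of_nonneg_left (hmax' s ⟨hτm.1.trans hs.1, hs.2⟩) hc0
  have h3 : (∫ s in τm..tst, c * w τm) = (tst - τm) * (c * w τm) := by
    rw [intervalIntegral.integral_const, smul_eq_mul]
  obtain ⟨W, hWeq⟩ : ∃ W : ℝ, w τm = W := ⟨_, rfl⟩
  rw [hWeq] at hWpos h1 h2 h3
  have h4 : (tst - τm) * (c * W) ≤ (1 / 2) * W := by
    have hs1 : tst - τm ≤ tst - t1 := by linarith [hτm.1]
    have e2 : c * (tst - τm) ≤ 1 / 2 := (mul_le_mul_of_nonneg_left hs1 hc0).trans ht1c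
    have e3 : (c * (tst - τm)) * W ≤ (1 / 2) * W := mul_le_mul_of_nonneg_right e2 hWpos.le
    nlinarith [e3]
  linarith

theorem stmt15_neg_sol (n : ℕ) (a h : Fin n → Fin n → ℝ → ℝ) (hbar t0 : ℝ)
    (x D : ℝ → Fin n → ℝ) (hx : IsSolEq n a h hbar t0 x D) :
    IsSolEq n a h hbar t0 (fun s i => -(x s i)) (fun s i => -(D s i)) := by
  obtain ⟨hLB, hDint, hrep, hae⟩ := hx
  refine ⟨?_, ?_, ?_, ?_⟩
  · intro T
    obtain ⟨C, hC⟩ := hLB T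
    exact ⟨C, fun i s hs => by simpa using hC i s hs⟩
  · intro i T
    exact (hDint i T).neg
  · intro i s hs
    show -(x s i) = -(x t0 i) + ∫ u in t0..s, -(D u i)
    rw [intervalIntegral.integral_neg]
    linarith [hrep i s hs]
  · filter_upwards [hae] with s hs ht i
    rw [hs ht i, ← Finset.sum_neg_distrib]
    exact Finset.sum_congr rfl fun j _ => by ring

theorem stmt15_Lam_neg (n : ℕ) (hn : 1 ≤ n) (hbar t0 : ℝ) (x : ℝ → Fin n → ℝ) :
    Lam n hbar (fun s i => -(x s i)) t0 = - lam n hbar x t0 := by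
  haveI : Nonempty (Fin n) := ⟨⟨0, hn⟩⟩
  have himg : ∀ i : Fin n, (fun s => -(x s i)) '' Icc (t0 - hbar) t0 =
      -((fun s => x s i) '' Icc (t0 - hbar) t0) := by
    intro i
    ext y
    simp only [Set.mem_image, Set.mem_neg]
    constructor
    · rintro ⟨s, hs, rfl⟩; exact ⟨s, hs, by ring⟩
    · rintro ⟨s, hs, hsy⟩; exact ⟨s, hs, by rw [hsy]; ring⟩
  have hssup : ∀ i : Fin n, sSup ((fun s => -(x s i)) '' Icc (t0 - hbar) t0) =
      - sInf ((fun s => x s i) '' Icc (t0 - hbar) t0) := by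
    intro i
    rw [himg i, Real.sInf_def]
    ring
  unfold Lam lam
  rw [iSup, iInf]
  have hr : Set.range (fun i : Fin n => sSup ((fun s => -(x s i)) '' Icc (t0 - hbar) t0)) =
      - Set.range (fun i : Fin n => sInf ((fun s => x s i) '' Icc (t0 - hbar) t0)) := by
    ext y
    simp only [Set.mem_range, Set.mem_neg]
    constructor
    · rintro ⟨i, rfl⟩; exact ⟨i, by rw [hssup i]; ring⟩
    · rintro ⟨i, hi⟩; exact ⟨i, by rw [hssup i, hi]; ring⟩
  rw [hr, Real.sInf_def]
  ring

theorem stmt15 (n : ℕ) (hn : 1 ≤ n) (abar hbar : ℝ) (habar : 0 ≤ abar) (hhbar : 0 ≤ hbar)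
    (a h : Fin n → Fin n → ℝ → ℝ)
    (ha : GoodWeights n abar a) (hh : GoodDelays n hbar h)
    (t0 : ℝ) (ht0 : 0 ≤ t0) (x D : ℝ → Fin n → ℝ)
    (hx : IsSolEq n a h hbar t0 x D) :
    ∀ i : Fin n, ∀ t : ℝ, t0 ≤ t →
      lam n hbar x t0 ≤ x t i ∧ x t i ≤ Lam n hbar x t0 := by
  intro i t ht
  constructor
  · have hneg := stmt15_upper n hn abar hbar habar hhbar a h ha hh t0 ht0
      (fun s j => -(x s j)) (fun s j => -(D s j)) (stmt15_neg_sol n a h hbar t0 x D hx) i t ht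
    rw [stmt15_Lam_neg n hn hbar t0 x] at hneg
    have hneg' : -(x t i) ≤ -lam n hbar x t0 := hneg
    linarith
  · exact stmt15_upper n hn abar hbar habar hhbar a h ha hh t0 ht0 x D hx i t ht
end
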